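/- arXiv:2308.02148 — 13 statements merged into one kernel-verified Lean document; each statement's English description precedes it below -/
import Mathlib

section
/- Let V be a chain complete partially ordered set and let S be an order preserving self-map of V with at most one fixed point in V. Then S is order stable on V: S has a unique fixed point v̄ in V, v ≤ Sv implies v ≤ v̄, and Sv ≤ v implies v̄ ≤ v. -/
/-- In a chain complete partially ordered set (bounded, with
suprema of all chains), an order preserving self-map `S` with at most one
fixed point is order stable: `S` has a unique fixed point `v̄`, `v ≤ S v`
implies `v ≤ v̄`, and `S v ≤ v` implies `v̄ ≤ v`. -/
theorem stmt1 {V : Type*} [PartialOrder V]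
    -- `V` is bounded:
    (bot top : V) (hbot : ∀ v : V, bot ≤ v) (htop : ∀ v : V, v ≤ top)
    -- every chain has a supremum:
    (hcc : ∀ C : Set V, IsChain (· ≤ ·) C → ∃ w : V, IsLUB C w)
    -- `S` is an order preserving self-map:
    (S : V → V) (hS : Monotone S)
    -- `S` has at most one fixed point:
    (huniq : ∀ u w : V, S u = u → S w = w → u = w) :
    ∃ vbar : V, S vbar = vbar ∧ (∀ v : V, S v = v → v = vbar) ∧
      (∀ v : V, v ≤ S v → v ≤ vbar) ∧ (∀ v : V, S v ≤ v → vbar ≤ v) := by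
  -- Upward: every post-fixed point lies below some fixed point.
  have key : ∀ v : V, v ≤ S v → ∃ w : V, S w = w ∧ v ≤ w := by
    intro v hv
    obtain ⟨m, hvm, hm, hmax⟩ :=
      zorn_le_nonempty₀ {u : V | u ≤ S u}
        (fun c hcs hc y hy => by
          obtain ⟨w, hw⟩ := hcc c hc
          refine ⟨w, ?_, fun z hz => hw.1 hz⟩
          exact le_trans (hw.2 (fun z hz => le_trans (hcs hz) (hS (hw.1 hz))))
            le_rfl)
        v hv
    have hSm : S m ∈ {u : V | u ≤ S u} := hS hm
    have : S m ≤ m := hmax hSm hm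
    exact ⟨m, le_antisymm this hm, hvm⟩
  -- Downward: every pre-fixed point lies above some fixed point.
  have key2 : ∀ v : V, S v ≤ v → ∃ w : V, S w = w ∧ w ≤ v := by
    intro v hv
    obtain ⟨m, _, ⟨hm1, hm2⟩, hmax⟩ :=
      zorn_le_nonempty₀ {u : V | u ≤ S u ∧ u ≤ v}
        (fun c hcs hc y hy => by
          obtain ⟨w, hw⟩ := hcc c hc
          refine ⟨w, ⟨?_, ?_⟩, fun z hz => hw.1 hz⟩
          · exact hw.2 (fun z hz => le_trans (hcs hz).1 (hS (hw.1 hz)))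
          · exact hw.2 (fun z hz => (hcs hz).2))
        bot ⟨hbot _, hbot _⟩
    have hSm : S m ∈ {u : V | u ≤ S u ∧ u ≤ v} :=
      ⟨hS hm1, le_trans (hS hm2) hv⟩
    have : S m ≤ m := hmax hSm hm1
    exact ⟨m, le_antisymm this hm1, hm2⟩
  obtain ⟨vbar, hfix, -⟩ := key bot (hbot _)
  refine ⟨vbar, hfix, fun v hv => huniq v vbar hv hfix, ?_, ?_⟩
  · intro v hv
    obtain ⟨w, hw, hvw⟩ := key v hv
    exact le_trans hvw (le_of_eq (huniq w vbar hw hfix))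
  · intro v hv
    obtain ⟨w, hw, hwv⟩ := key2 v hv
    exact le_trans (le_of_eq (huniq vbar w hfix hw)) hwv
end

section
/- Let V be a countably chain complete partially ordered set and let S be an order continuous self-map of V with at most one fixed point in V. Then S is order stable on V: S has a unique fixed point v̄ in V, v ≤ Sv implies v ≤ v̄, and Sv ≤ v implies v̄ ≤ v. -/
/-- In a countably chain complete partially ordered set (bounded,
with suprema of increasing sequences), an order continuous self-map `S` with at
most one fixed point is order stable: `S` has a unique fixed point `v̄`,
`v ≤ S v` implies `v ≤ v̄`, and `S v ≤ v` implies `v̄ ≤ v`. -/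
theorem stmt2 {V : Type*} [PartialOrder V]
    -- `V` is bounded:
    (bot top : V) (hbot : ∀ v : V, bot ≤ v) (htop : ∀ v : V, v ≤ top)
    -- every increasing sequence has a supremum:
    (hccc : ∀ f : ℕ → V, Monotone f → ∃ w : V, IsLUB (Set.range f) w)
    -- `S` is an order continuous self-map:
    (S : V → V)
    (hS : ∀ (f : ℕ → V) (v : V), Monotone f → IsLUB (Set.range f) v →
      Monotone (fun n => S (f n)) ∧ IsLUB (Set.range fun n => S (f n)) (S v))
    -- `S` has at most one fixed point:
    (huniq : ∀ u w : V, S u = u → S w = w → u = w) :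
    ∃ vbar : V, S vbar = vbar ∧ (∀ v : V, S v = v → v = vbar) ∧
      (∀ v : V, v ≤ S v → v ≤ vbar) ∧ (∀ v : V, S v ≤ v → vbar ≤ v) := by
  -- S is monotone
  have Smono : Monotone S := by
    intro a b hab
    set f : ℕ → V := fun n => if n = 0 then a else b with hf
    have hfm : Monotone f := by
      intro m n hmn
      by_cases hm : m = 0 <;> by_cases hn : n = 0 <;>
        simp [hf, hm, hn, hab, le_refl] <;> omega
    have hlub : IsLUB (Set.range f) b := by
      constructor
      · rintro x ⟨n, rfl⟩
        by_cases hn : n = 0 <;> simp [hf, hn, hab]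
      · intro x hx
        have : f 1 ≤ x := hx ⟨1, rfl⟩
        simpa [hf] using this
    have := (hS f b hfm hlub).1 (Nat.zero_le 1)
    simpa [hf] using this
  -- for any a ≤ S a, the sup of iterates is a fixed point above a,
  -- below any v with a ≤ v and S v ≤ v.
  have key : ∀ a : V, a ≤ S a → ∃ w : V, S w = w ∧ a ≤ w ∧
      ∀ v : V, a ≤ v → S v ≤ v → w ≤ v := by
    intro a ha
    set g : ℕ → V := fun n => S^[n] a with hg
    have hstep : ∀ n, g (n + 1) = S (g n) := by
      intro n; simp [hg, Function.iterate_succ_apply']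
    have hgm : Monotone g := by
      apply monotone_nat_of_le_succ
      intro n
      induction n with
      | zero => simpa [hg] using ha
      | succ k ih => rw [hstep, hstep]; exact Smono ih
    obtain ⟨w, hw⟩ := hccc g hgm
    obtain ⟨hSgm, hSlub⟩ := hS g w hgm hw
    -- S w is also a LUB of range g
    have hlub2 : IsLUB (Set.range g) (S w) := by
      constructor
      · rintro x ⟨n, rfl⟩
        calc g n ≤ g (n + 1) := hgm (Nat.le_succ n)
          _ = S (g n) := hstep n
          _ ≤ S w := hSlub.1 ⟨n, rfl⟩
      · intro x hx
        apply hSlub.2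
        rintro y ⟨n, rfl⟩
        have : g (n + 1) ≤ x := hx ⟨n + 1, rfl⟩
        rw [hstep] at this
        exact this
    have hfix : S w = w := (hlub2.unique hw)
    refine ⟨w, hfix, hw.1 ⟨0, rfl⟩, ?_⟩
    intro v hav hSv
    apply hw.2
    rintro y ⟨n, rfl⟩
    induction n with
    | zero => exact hav
    | succ k ih => rw [hstep]; exact le_trans (Smono ih) hSv
  obtain ⟨vbar, hfix, _, hmin⟩ := key bot (hbot _)
  refine ⟨vbar, hfix, fun v hv => huniq v vbar hv hfix, ?_, ?_⟩
  · intro v hv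
    obtain ⟨w, hwfix, hvw, _⟩ := key v hv
    rwa [huniq w vbar hwfix hfix] at hvw
  · intro v hv
    exact hmin v (hbot v) hv
end

section
/- Let (V, 𝕋) be a regular ADP such that every T_σ is order continuous and V is countably chain complete. Then the Bellman operator T is order continuous on V: if v_n ↑ v̄ in V, then T v_n ↑ T v̄. -/
/-- Let `(V, 𝕋)` be a regular ADP whose policy operators are all
order continuous, and suppose `V` is countably chain complete.  Then the
Bellman operator `Bell` is order continuous on `V`: if `v_n ↑ v̄` then
`Bell v_n ↑ Bell v̄`. -/
theorem stmt6 {V Pol : Type*} [PartialOrder V] [Nonempty Pol]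
    (T : Pol → V → V) (hmono : ∀ σ : Pol, Monotone (T σ))
    -- regularity: every `v` has a `v`-greedy policy:
    (hreg : ∀ v : V, ∃ σ : Pol, ∀ τ : Pol, T τ v ≤ T σ v)
    -- the Bellman operator:
    (Bell : V → V)
    (hBell : ∀ (v : V) (σ : Pol), (∀ τ : Pol, T τ v ≤ T σ v) → Bell v = T σ v)
    -- each policy operator is order continuous:
    (hcont : ∀ (σ : Pol) (f : ℕ → V) (v : V), Monotone f → IsLUB (Set.range f) v →
      IsLUB (Set.range fun n => T σ (f n)) (T σ v))
    -- `V` is countably chain complete (bounded, increasing sequences have suprema):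
    (bot top : V) (hbot : ∀ v : V, bot ≤ v) (htop : ∀ v : V, v ≤ top)
    (hccc : ∀ f : ℕ → V, Monotone f → ∃ w : V, IsLUB (Set.range f) w) :
    ∀ (f : ℕ → V) (vbar : V), Monotone f → IsLUB (Set.range f) vbar →
      Monotone (fun n => Bell (f n)) ∧
      IsLUB (Set.range fun n => Bell (f n)) (Bell vbar) := by
  intro f vbar hf hlub
  have hBmono : Monotone Bell := by
    intro v w hvw
    obtain ⟨σ, hσ⟩ := hreg v
    obtain ⟨τ, hτ⟩ := hreg w
    rw [hBell v σ hσ, hBell w τ hτ]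
    exact le_trans (hmono σ hvw) (hτ σ)
  refine ⟨fun m n hmn => hBmono (hf hmn), ?_⟩
  obtain ⟨σ, hσ⟩ := hreg vbar
  have hB : Bell vbar = T σ vbar := hBell vbar σ hσ
  have hc := hcont σ f vbar hf hlub
  constructor
  · rintro x ⟨n, rfl⟩
    have : f n ≤ vbar := hlub.1 ⟨n, rfl⟩
    exact hBmono this
  · intro w hw
    rw [hB]
    apply hc.2
    rintro x ⟨n, rfl⟩
    obtain ⟨τ, hτ⟩ := hreg (f n)
    calc T σ (f n) ≤ T τ (f n) := hτ σ
      _ = Bell (f n) := (hBell _ τ hτ).symm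
      _ ≤ w := hw ⟨n, rfl⟩
end

section
/- Let (V, 𝕋) be a regular, well-posed ADP and suppose V_Σ has a greatest element v*. Then v* satisfies the Bellman equation Tv* = v* if and only if Bellman's principle of optimality holds, i.e., for every σ ∈ Σ, σ is optimal if and only if σ is v*-greedy. -/
/-- Let `(V, 𝕋)` be a regular well-posed ADP and suppose
`V_Σ = {v_σ : σ ∈ Σ}` has a greatest element `v* = v_{σ*}`.  Then `v*`
satisfies the Bellman equation `Bell v* = v*` if and only if Bellman's
principle of optimality holds: for every `σ`, `σ` is optimal iff `σ` is
`v*`-greedy. -/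
theorem stmt7 {V Pol : Type*} [PartialOrder V] [Nonempty Pol]
    (T : Pol → V → V) (hmono : ∀ σ : Pol, Monotone (T σ))
    -- regularity:
    (hreg : ∀ v : V, ∃ σ : Pol, ∀ τ : Pol, T τ v ≤ T σ v)
    -- the Bellman operator:
    (Bell : V → V)
    (hBell : ∀ (v : V) (σ : Pol), (∀ τ : Pol, T τ v ≤ T σ v) → Bell v = T σ v)
    -- well-posedness: `vfix σ` is the unique fixed point of `T σ`:
    (vfix : Pol → V) (hfix : ∀ σ : Pol, T σ (vfix σ) = vfix σ)
    (huniq : ∀ (σ : Pol) (v : V), T σ v = v → v = vfix σ)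
    -- `v* = vfix σstar` is a greatest element of `V_Σ`:
    (σstar : Pol) (hstar : ∀ τ : Pol, vfix τ ≤ vfix σstar) :
    Bell (vfix σstar) = vfix σstar ↔
      (∀ σ : Pol, (∀ τ : Pol, vfix τ ≤ vfix σ) ↔
        (∀ τ : Pol, T τ (vfix σstar) ≤ T σ (vfix σstar))) := by
  constructor
  · intro hB σ
    constructor
    · intro hopt τ
      have heq : vfix σ = vfix σstar := le_antisymm (hstar σ) (hopt σstar)
      obtain ⟨g, hg⟩ := hreg (vfix σstar)
      have : Bell (vfix σstar) = T g (vfix σstar) := hBell _ _ hg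
      calc T τ (vfix σstar) ≤ T g (vfix σstar) := hg τ
        _ = vfix σstar := by rw [← this, hB]
        _ = T σ (vfix σstar) := by rw [← heq, hfix]
    · intro hgr τ
      have : T σ (vfix σstar) = vfix σstar := by rw [← hBell _ _ hgr, hB]
      have := huniq σ _ this
      rw [← this]; exact hstar τ
  · intro hP
    have hgr := (hP σstar).mp hstar
    rw [hBell _ _ hgr, hfix]
end

section
/- Let (V, 𝕋) be a regular, well-posed ADP that is downward stable, and suppose the Bellman operator T has at least one fixed point in V. Then the fundamental ADP optimality results hold: (B1) V_Σ has a greatest element v*; (B2) v* is the unique fixed point of T in V; (B3) Bellman's principle of optimality holds (for every σ ∈ Σ, σ is optimal if and only if σ is v*-greedy). -/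
/-- Theorem t:bk: Let `(V, 𝕋)` be a regular well-posed ADP that
is downward stable, and suppose the Bellman operator `Bell` has at least one
fixed point in `V`.  Then the fundamental ADP optimality results hold:
(B1) `V_Σ` has a greatest element `v* = vfix σ*`; (B2) `v*` is the unique
fixed point of `Bell` in `V`; (B3) Bellman's principle of optimality holds. -/
theorem stmt8 {V Pol : Type*} [PartialOrder V] [Nonempty Pol]
    (T : Pol → V → V) (hmono : ∀ σ : Pol, Monotone (T σ))
    -- regularity:
    (hreg : ∀ v : V, ∃ σ : Pol, ∀ τ : Pol, T τ v ≤ T σ v)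
    -- the Bellman operator:
    (Bell : V → V)
    (hBell : ∀ (v : V) (σ : Pol), (∀ τ : Pol, T τ v ≤ T σ v) → Bell v = T σ v)
    -- well-posedness:
    (vfix : Pol → V) (hfix : ∀ σ : Pol, T σ (vfix σ) = vfix σ)
    (huniq : ∀ (σ : Pol) (v : V), T σ v = v → v = vfix σ)
    -- downward stability of every policy operator:
    (hdown : ∀ (σ : Pol) (v : V), T σ v ≤ v → vfix σ ≤ v)
    -- the Bellman operator has at least one fixed point:
    (hfp : ∃ v : V, Bell v = v) :
    ∃ σstar : Pol,
      -- (B1): `vfix σstar` is a greatest element of `V_Σ`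
      (∀ τ : Pol, vfix τ ≤ vfix σstar) ∧
      -- (B2): `v*` is the unique fixed point of `Bell` in `V`
      Bell (vfix σstar) = vfix σstar ∧
      (∀ v : V, Bell v = v → v = vfix σstar) ∧
      -- (B3): Bellman's principle of optimality
      (∀ σ : Pol, (∀ τ : Pol, vfix τ ≤ vfix σ) ↔
        (∀ τ : Pol, T τ (vfix σstar) ≤ T σ (vfix σstar))) := by
  obtain ⟨vbar, hvbar⟩ := hfp
  obtain ⟨σstar, hσstar⟩ := hreg vbar
  have hT : T σstar vbar = vbar := by rw [← hBell vbar σstar hσstar, hvbar]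
  have hveq : vbar = vfix σstar := huniq σstar vbar hT
  have hB1 : ∀ τ : Pol, vfix τ ≤ vfix σstar := by
    intro τ
    rw [← hveq]
    exact hdown τ vbar (le_of_le_of_eq (hσstar τ) hT)
  refine ⟨σstar, hB1, ?_, ?_, ?_⟩
  · rw [← hveq, hvbar]
  · intro v hv
    obtain ⟨σ, hσ⟩ := hreg v
    have hTv : T σ v = v := by rw [← hBell v σ hσ, hv]
    have h1 : v ≤ vfix σstar := (huniq σ v hTv) ▸ hB1 σ
    have h2 : vfix σstar ≤ v := hdown σstar v (le_of_le_of_eq (hσ σstar) (by rw [← hBell v σ hσ, hv]))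
    exact le_antisymm h1 h2
  · intro σ
    constructor
    · intro hopt τ
      have : vfix σ = vfix σstar := le_antisymm (hB1 σ) (hopt σstar)
      calc T τ (vfix σstar) ≤ T σstar (vfix σstar) := by
            rw [← hveq]; exact hσstar τ
        _ = vfix σstar := by rw [← hveq]; exact hT
        _ = T σ (vfix σstar) := by rw [← this, hfix]
    · intro hg τ
      have hTσ : T σ (vfix σstar) = vfix σstar := by
        have := le_antisymm (hg σstar) ((hveq ▸ hσstar σ : T σ (vfix σstar) ≤ T σstar (vfix σstar)))
        rw [← this, ← hveq, hT]
      have := huniq σ (vfix σstar) hTσ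
      rw [← this]
      exact hB1 τ
end

section
/- Let (V, 𝕋) be a regular, well-posed ADP whose value space V is chain complete. Then the fundamental ADP optimality results hold: (B1) V_Σ has a greatest element v*; (B2) v* is the unique fixed point of the Bellman operator T in V; (B3) Bellman's principle of optimality holds (for every σ ∈ Σ, σ is optimal if and only if σ is v*-greedy). -/
/-- Abian–Brown style fixed point lemma: a monotone map on a chain-complete
poset with a least element, satisfying `f w ≤ w`, has a fixed point `≤ w`. -/
lemma stmt9_aux {V : Type*} [PartialOrder V] (f : V → V) (hf : Monotone f)
    (bot w : V) (hbot : ∀ v : V, bot ≤ v) (hw : f w ≤ w)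
    (hcc : ∀ C : Set V, IsChain (· ≤ ·) C → ∃ s : V, IsLUB C s) :
    ∃ m : V, f m = m ∧ m ≤ w := by
  set S : Set V := {v | v ≤ f v ∧ v ≤ w} with hS
  have hbotS : bot ∈ S := ⟨hbot _, hbot _⟩
  obtain ⟨m, hm⟩ := zorn_le₀ S (fun c hcS hc => by
    rcases c.eq_empty_or_nonempty with rfl | ⟨x, hx⟩
    · exact ⟨bot, hbotS, by simp⟩
    · obtain ⟨s, hs⟩ := hcc c hc
      have hsub : ∀ z ∈ c, z ≤ s := fun z hz => hs.1 hz
      have hsfw : s ≤ w := hs.2 (fun z hz => (hcS hz).2)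
      have hsfs : s ≤ f s := hs.2 (fun z hz => le_trans (hcS hz).1 (hf (hsub z hz)))
      exact ⟨s, ⟨hsfs, hsfw⟩, hsub⟩)
  have hmS : m ∈ S := hm.1
  have hfmS : f m ∈ S := ⟨hf hmS.1, le_trans (hf hmS.2) hw⟩
  have : f m ≤ m := hm.2 hfmS hmS.1
  exact ⟨m, le_antisymm this hmS.1, hmS.2⟩

/-- Theorem t:bkn: Let `(V, 𝕋)` be a regular well-posed ADP
whose value space `V` is chain complete (bounded, every chain has a supremum).
Then the fundamental ADP optimality results hold: (B1) `V_Σ` has a greatest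
element `v* = vfix σ*`; (B2) `v*` is the unique fixed point of the Bellman
operator in `V`; (B3) Bellman's principle of optimality holds. -/
theorem stmt9 {V Pol : Type*} [PartialOrder V] [Nonempty Pol]
    (T : Pol → V → V) (hmono : ∀ σ : Pol, Monotone (T σ))
    -- regularity:
    (hreg : ∀ v : V, ∃ σ : Pol, ∀ τ : Pol, T τ v ≤ T σ v)
    -- the Bellman operator:
    (Bell : V → V)
    (hBell : ∀ (v : V) (σ : Pol), (∀ τ : Pol, T τ v ≤ T σ v) → Bell v = T σ v)
    -- well-posedness:
    (vfix : Pol → V) (hfix : ∀ σ : Pol, T σ (vfix σ) = vfix σ)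
    (huniq : ∀ (σ : Pol) (v : V), T σ v = v → v = vfix σ)
    -- `V` is chain complete:
    (bot top : V) (hbot : ∀ v : V, bot ≤ v) (htop : ∀ v : V, v ≤ top)
    (hcc : ∀ C : Set V, IsChain (· ≤ ·) C → ∃ w : V, IsLUB C w) :
    ∃ σstar : Pol,
      -- (B1):
      (∀ τ : Pol, vfix τ ≤ vfix σstar) ∧
      -- (B2):
      Bell (vfix σstar) = vfix σstar ∧
      (∀ v : V, Bell v = v → v = vfix σstar) ∧
      -- (B3):
      (∀ σ : Pol, (∀ τ : Pol, vfix τ ≤ vfix σ) ↔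
        (∀ τ : Pol, T τ (vfix σstar) ≤ T σ (vfix σstar))) := by
  -- Bell is monotone
  have hBmono : Monotone Bell := by
    intro v w hvw
    obtain ⟨σ, hσ⟩ := hreg v
    obtain ⟨τ, hτ⟩ := hreg w
    rw [hBell v σ hσ, hBell w τ hτ]
    exact le_trans (hmono σ hvw) (hτ σ)
  -- Bell has a fixed point v0
  obtain ⟨v0, hv0, _⟩ := stmt9_aux Bell hBmono bot top hbot (htop _) hcc
  obtain ⟨σs, hσs⟩ := hreg v0
  have hTσs : T σs v0 = v0 := by rw [← hBell v0 σs hσs, hv0]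
  have hv0fix : v0 = vfix σs := huniq σs v0 hTσs
  -- every vfix τ ≤ v0
  have hB1 : ∀ τ : Pol, vfix τ ≤ v0 := by
    intro τ
    have hτv0 : T τ v0 ≤ v0 := le_of_le_of_eq (hσs τ) hTσs
    obtain ⟨m, hm, hmle⟩ := stmt9_aux (T τ) (hmono τ) bot v0 hbot hτv0 hcc
    rw [← huniq τ m hm]; exact hmle
  have hBellv0 : Bell v0 = v0 := hv0
  refine ⟨σs, ?_, ?_, ?_, ?_⟩
  · intro τ; rw [← hv0fix]; exact hB1 τ
  · rw [← hv0fix]; exact hv0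
  · intro v hv
    rw [← hv0fix]
    obtain ⟨σ, hσ⟩ := hreg v
    have hTv : T σ v = v := by rw [← hBell v σ hσ, hv]
    have h1 : v ≤ v0 := (huniq σ v hTv) ▸ hB1 σ
    have h2 : v0 ≤ v := by
      have hσsv : T σs v ≤ v := le_of_le_of_eq (hσ σs) hTv
      obtain ⟨m, hm, hmle⟩ := stmt9_aux (T σs) (hmono σs) bot v hbot hσsv hcc
      have : m = vfix σs := huniq σs m hm
      rw [hv0fix, ← this]; exact hmle
    exact le_antisymm h1 h2
  · intro σ
    rw [← hv0fix]
    constructor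
    · intro hopt τ
      have hveq : vfix σ = v0 := le_antisymm (hB1 σ) (hv0fix ▸ hopt σs)
      have : T σ v0 = v0 := by
        conv_lhs => rw [← hveq]
        rw [hfix σ, hveq]
      rw [this]; exact le_of_le_of_eq (hσs τ) hTσs
    · intro hgr τ
      have hTσ : T σ v0 = v0 := by rw [← hBell v0 σ hgr, hv0]
      have : v0 = vfix σ := huniq σ v0 hTσ
      rw [← this]; exact hB1 τ
end

section
/- Let (V, 𝕋) be a regular, well-posed ADP that is order continuous, and suppose V is countably chain complete. Then: (i) the fundamental ADP optimality results hold ((B1) V_Σ has a greatest element v*; (B2) v* is the unique fixed point of T in V; (B3) σ is optimal if and only if σ is v*-greedy); and (ii) VFI, OPI and HPI all converge: for every v ∈ V_U, Tⁿv ↑ v*, W_mⁿv ↑ v* and Hⁿv ↑ v*. -/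
/-- Theorem t:impliesms: Let `(V, 𝕋)` be a regular well-posed
ADP that is order continuous, with `V` countably chain complete.  Then (i) the
fundamental ADP optimality results hold, and (ii) VFI, OPI and HPI all
converge: for every `v ∈ V_U` the iterates `Bellⁿ v`, `W_mⁿ v`, `Hⁿ v` are
increasing with supremum `v*`. -/
theorem stmt10 {V Pol : Type*} [PartialOrder V] [Nonempty Pol]
    (T : Pol → V → V) (hmono : ∀ σ : Pol, Monotone (T σ))
    -- regularity:
    (hreg : ∀ v : V, ∃ σ : Pol, ∀ τ : Pol, T τ v ≤ T σ v)
    -- the Bellman operator: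
    (Bell : V → V)
    (hBell : ∀ (v : V) (σ : Pol), (∀ τ : Pol, T τ v ≤ T σ v) → Bell v = T σ v)
    -- well-posedness:
    (vfix : Pol → V) (hfix : ∀ σ : Pol, T σ (vfix σ) = vfix σ)
    (huniq : ∀ (σ : Pol) (v : V), T σ v = v → v = vfix σ)
    -- order continuity of every policy operator:
    (hcont : ∀ (σ : Pol) (f : ℕ → V) (v : V), Monotone f → IsLUB (Set.range f) v →
      IsLUB (Set.range fun n => T σ (f n)) (T σ v))
    -- `V` is countably chain complete:
    (bot top : V) (hbot : ∀ v : V, bot ≤ v) (htop : ∀ v : V, v ≤ top)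
    (hccc : ∀ f : ℕ → V, Monotone f → ∃ w : V, IsLUB (Set.range f) w)
    -- a fixed greedy selection, defining `H v = vfix (sel v)` and
    -- `W_m v = (T (sel v))^[m] v`:
    (sel : V → Pol) (hsel : ∀ v : V, ∀ τ : Pol, T τ v ≤ T (sel v) v)
    (m : ℕ) (hm : 1 ≤ m) :
    ∃ σstar : Pol,
      -- (B1):
      (∀ τ : Pol, vfix τ ≤ vfix σstar) ∧
      -- (B2):
      Bell (vfix σstar) = vfix σstar ∧
      (∀ v : V, Bell v = v → v = vfix σstar) ∧
      -- (B3):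
      (∀ σ : Pol, (∀ τ : Pol, vfix τ ≤ vfix σ) ↔
        (∀ τ : Pol, T τ (vfix σstar) ≤ T σ (vfix σstar))) ∧
      -- (ii) convergence of VFI, OPI and HPI on `V_U`:
      (∀ v : V, v ≤ Bell v →
        (Monotone fun n => Bell^[n] v) ∧
        IsLUB (Set.range fun n => Bell^[n] v) (vfix σstar) ∧
        (Monotone fun n => (fun w => (T (sel w))^[m] w)^[n] v) ∧
        IsLUB (Set.range fun n => (fun w => (T (sel w))^[m] w)^[n] v) (vfix σstar) ∧
        (Monotone fun n => (fun w => vfix (sel w))^[n] v) ∧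
        IsLUB (Set.range fun n => (fun w => vfix (sel w))^[n] v) (vfix σstar)) := by
  -- basic facts about Bell
  have hBellsel : ∀ v : V, Bell v = T (sel v) v := fun v => hBell v (sel v) (hsel v)
  have hTBell : ∀ (v : V) (τ : Pol), T τ v ≤ Bell v := by
    intro v τ; rw [hBellsel v]; exact hsel v τ
  have hBellmono : Monotone Bell := by
    intro u v huv
    rw [hBellsel u]
    exact le_trans (hmono (sel u) huv) (hTBell v (sel u))
  -- monotonicity of iterates starting below
  have hmonoIter : ∀ (S : V → V), Monotone S → ∀ u : V, u ≤ S u →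
      Monotone fun n => S^[n] u := by
    intro S hS u hu
    apply monotone_nat_of_le_succ
    intro n
    induction n with
    | zero => simpa using hu
    | succ k ih =>
      rw [Function.iterate_succ_apply', Function.iterate_succ_apply']
      exact hS ih
  -- the LUB of the T σ iterates is a fixed point, hence vfix σ
  have lemA : ∀ (σ : Pol) (u z : V), u ≤ T σ u →
      IsLUB (Set.range fun n => (T σ)^[n] u) z → z = vfix σ := by
    intro σ u z hu hz
    have hmf : Monotone fun n => (T σ)^[n] u := hmonoIter (T σ) (hmono σ) u hu
    have h2 := hcont σ _ z hmf hz
    have hle : T σ z ≤ z := by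
      apply h2.2
      rintro x ⟨n, rfl⟩
      show T σ ((T σ)^[n] u) ≤ z
      rw [← Function.iterate_succ_apply' (T σ) n u]
      exact hz.1 (Set.mem_range_self (n+1))
    have hge : z ≤ T σ z := by
      apply hz.2
      rintro x ⟨n, rfl⟩
      calc (T σ)^[n] u ≤ (T σ)^[n+1] u := hmf (Nat.le_succ n)
        _ = T σ ((T σ)^[n] u) := Function.iterate_succ_apply' (T σ) n u
        _ ≤ T σ z := hmono σ (hz.1 (Set.mem_range_self n))
    exact huniq σ z (le_antisymm hle hge)
  -- u ≤ T σ u → u ≤ vfix σ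
  have lemUp : ∀ (σ : Pol) (u : V), u ≤ T σ u → u ≤ vfix σ := by
    intro σ u hu
    obtain ⟨z, hz⟩ := hccc _ (hmonoIter (T σ) (hmono σ) u hu)
    have := lemA σ u z hu hz
    rw [← this]
    simpa using hz.1 (Set.mem_range_self 0)
  -- T σ u ≤ u → vfix σ ≤ u
  have lemDown : ∀ (σ : Pol) (u : V), T σ u ≤ u → vfix σ ≤ u := by
    intro σ u hu
    have hb : bot ≤ T σ bot := hbot _
    obtain ⟨z, hz⟩ := hccc _ (hmonoIter (T σ) (hmono σ) bot hb)
    have hz' := lemA σ bot z hb hz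
    rw [← hz']
    apply hz.2
    rintro x ⟨n, rfl⟩
    induction n with
    | zero => simpa using hbot u
    | succ k ih =>
      show (T σ)^[k+1] bot ≤ u
      rw [Function.iterate_succ_apply']
      exact le_trans (hmono σ ih) hu
  -- LUB of Bell iterates is a fixed point of Bell
  have lemB : ∀ (v z : V), v ≤ Bell v → IsLUB (Set.range fun n => Bell^[n] v) z →
      Bell z = z := by
    intro v z hv hz
    have hmf : Monotone fun n => Bell^[n] v := hmonoIter Bell hBellmono v hv
    have hle : Bell z ≤ z := by
      rw [hBellsel z]
      have h2 := hcont (sel z) _ z hmf hz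
      apply h2.2
      rintro x ⟨n, rfl⟩
      calc T (sel z) (Bell^[n] v) ≤ Bell (Bell^[n] v) := hTBell _ _
        _ = Bell^[n+1] v := (Function.iterate_succ_apply' Bell n v).symm
        _ ≤ z := hz.1 (Set.mem_range_self (n+1))
    have hge : z ≤ Bell z := by
      apply hz.2
      rintro x ⟨n, rfl⟩
      calc Bell^[n] v ≤ Bell^[n+1] v := hmf (Nat.le_succ n)
        _ = Bell (Bell^[n] v) := Function.iterate_succ_apply' Bell n v
        _ ≤ Bell z := hBellmono (hz.1 (Set.mem_range_self n))
    exact le_antisymm hle hge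
  -- construct w = v*
  have hbB : bot ≤ Bell bot := hbot _
  obtain ⟨w, hw⟩ := hccc _ (hmonoIter Bell hBellmono bot hbB)
  have hwfix : Bell w = w := lemB bot w hbB hw
  have hws : vfix (sel w) = w := by
    have : T (sel w) w = w := by rw [← hBellsel w]; exact hwfix
    exact (huniq (sel w) w this).symm
  -- (B1)
  have hB1 : ∀ τ : Pol, vfix τ ≤ w := by
    intro τ
    apply lemDown
    calc T τ w ≤ Bell w := hTBell w τ
      _ = w := hwfix
  -- (B2) uniqueness
  have hB2u : ∀ v : V, Bell v = v → v = w := by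
    intro v hvfix
    have h1 : w ≤ v := by
      rw [← hws]
      apply lemDown
      calc T (sel w) v ≤ Bell v := hTBell v (sel w)
        _ = v := hvfix
    have h2 : v ≤ w := by
      have : v = vfix (sel v) := huniq (sel v) v (by rw [← hBellsel v]; exact hvfix)
      rw [this]; exact hB1 (sel v)
    exact le_antisymm h2 h1
  -- facts about V_U
  have hVUgreedy : ∀ u : V, u ≤ Bell u → u ≤ T (sel u) u := by
    intro u hu; rwa [hBellsel u] at hu
  have hVUle : ∀ u : V, u ≤ Bell u → u ≤ w := by
    intro u hu
    exact le_trans (lemUp (sel u) u (hVUgreedy u hu)) (hB1 (sel u))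
  -- W operator facts
  have hWup : ∀ u : V, u ≤ Bell u → u ≤ (T (sel u))^[m] u := by
    intro u hu
    have := (hmonoIter (T (sel u)) (hmono (sel u)) u (hVUgreedy u hu)) (Nat.zero_le m)
    simpa using this
  have hWVU : ∀ u : V, u ≤ Bell u → (T (sel u))^[m] u ≤ Bell ((T (sel u))^[m] u) := by
    intro u hu
    calc (T (sel u))^[m] u ≤ (T (sel u))^[m+1] u :=
          (hmonoIter (T (sel u)) (hmono (sel u)) u (hVUgreedy u hu)) (Nat.le_succ m)
      _ = T (sel u) ((T (sel u))^[m] u) := Function.iterate_succ_apply' _ m u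
      _ ≤ Bell ((T (sel u))^[m] u) := hTBell _ _
  have hBellleW : ∀ u : V, u ≤ Bell u → Bell u ≤ (T (sel u))^[m] u := by
    intro u hu
    have h1 : (T (sel u))^[1] u ≤ (T (sel u))^[m] u :=
      (hmonoIter (T (sel u)) (hmono (sel u)) u (hVUgreedy u hu)) hm
    rw [hBellsel u]
    simpa using h1
  have hWleH : ∀ u : V, u ≤ Bell u → (T (sel u))^[m] u ≤ vfix (sel u) := by
    intro u hu
    have h1 : u ≤ vfix (sel u) := lemUp (sel u) u (hVUgreedy u hu)
    calc (T (sel u))^[m] u ≤ (T (sel u))^[m] (vfix (sel u)) :=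
          ((hmono (sel u)).iterate m) h1
      _ = vfix (sel u) := Function.iterate_fixed (hfix (sel u)) m
  have hBellleH : ∀ u : V, u ≤ Bell u → Bell u ≤ vfix (sel u) := by
    intro u hu
    exact le_trans (hBellleW u hu) (hWleH u hu)
  have hHVU : ∀ σ : Pol, vfix σ ≤ Bell (vfix σ) := by
    intro σ
    calc vfix σ = T σ (vfix σ) := (hfix σ).symm
      _ ≤ Bell (vfix σ) := hTBell _ _
  refine ⟨sel w, ?_, ?_, ?_, ?_, ?_⟩
  · rw [hws]; exact hB1
  · rw [hws]; exact hwfix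
  · rw [hws]; exact hB2u
  · rw [hws]
    intro σ
    constructor
    · intro hopt τ
      have heq : vfix σ = w := le_antisymm (hB1 σ) (by rw [← hws]; exact hopt (sel w))
      have hTσ : T σ w = w := by rw [← heq]; exact hfix σ
      rw [hTσ]
      calc T τ w ≤ Bell w := hTBell w τ
        _ = w := hwfix
    · intro hgre τ
      have : T σ w = w := by rw [← hBell w σ hgre]; exact hwfix
      have hσw : w = vfix σ := huniq σ w this
      rw [← hσw]; exact hB1 τ
  · rw [hws]
    intro v hv
    -- invariants of V_U under Bell iterates
    have hBellVU : ∀ n : ℕ, Bell^[n] v ≤ Bell (Bell^[n] v) := by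
      intro n
      induction n with
      | zero => simpa using hv
      | succ k ih =>
        rw [Function.iterate_succ_apply']
        exact hBellmono ih
    have hmonoB : Monotone fun n => Bell^[n] v := hmonoIter Bell hBellmono v hv
    obtain ⟨zB, hzB⟩ := hccc _ hmonoB
    have hzBw : zB = w := hB2u zB (lemB v zB hv hzB)
    -- OPI sequence
    set Wop : V → V := fun u => (T (sel u))^[m] u with hWop
    have hOVU : ∀ n : ℕ, Wop^[n] v ≤ Bell (Wop^[n] v) := by
      intro n
      induction n with
      | zero => simpa using hv
      | succ k ih =>
        rw [Function.iterate_succ_apply']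
        exact hWVU _ ih
    have hmonoO : Monotone fun n => Wop^[n] v := by
      apply monotone_nat_of_le_succ
      intro n
      rw [Function.iterate_succ_apply']
      exact hWup _ (hOVU n)
    obtain ⟨zO, hzO⟩ := hccc _ hmonoO
    have hBleO : ∀ n : ℕ, Bell^[n] v ≤ Wop^[n] v := by
      intro n
      induction n with
      | zero => simp
      | succ k ih =>
        rw [Function.iterate_succ_apply', Function.iterate_succ_apply']
        exact le_trans (hBellmono ih) (hBellleW _ (hOVU k))
    have hzOw : zO = w := by
      apply le_antisymm
      · apply hzO.2
        rintro x ⟨n, rfl⟩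
        exact hVUle _ (hOVU n)
      · rw [← hzBw]
        apply hzB.2
        rintro x ⟨n, rfl⟩
        exact le_trans (hBleO n) (hzO.1 (Set.mem_range_self n))
    -- HPI sequence
    set Hop : V → V := fun u => vfix (sel u) with hHop
    have hHVUn : ∀ n : ℕ, Hop^[n] v ≤ Bell (Hop^[n] v) := by
      intro n
      induction n with
      | zero => simpa using hv
      | succ k ih =>
        rw [Function.iterate_succ_apply']
        exact hHVU (sel (Hop^[k] v))
    have hmonoH : Monotone fun n => Hop^[n] v := by
      apply monotone_nat_of_le_succ
      intro n
      rw [Function.iterate_succ_apply']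
      exact lemUp _ _ (hVUgreedy _ (hHVUn n))
    obtain ⟨zH, hzH⟩ := hccc _ hmonoH
    have hBleH : ∀ n : ℕ, Bell^[n] v ≤ Hop^[n] v := by
      intro n
      induction n with
      | zero => simp
      | succ k ih =>
        rw [Function.iterate_succ_apply', Function.iterate_succ_apply']
        exact le_trans (hBellmono ih) (hBellleH _ (hHVUn k))
    have hzHw : zH = w := by
      apply le_antisymm
      · apply hzH.2
        rintro x ⟨n, rfl⟩
        exact hVUle _ (hHVUn n)
      · rw [← hzBw]
        apply hzB.2
        rintro x ⟨n, rfl⟩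
        exact le_trans (hBleH n) (hzH.1 (Set.mem_range_self n))
    rw [hzBw] at hzB
    rw [hzOw] at hzO
    rw [hzHw] at hzH
    exact ⟨hmonoB, hzB, hmonoO, hzO, hmonoH, hzH⟩
end

section
/- Let (V, 𝕋) be a regular, well-posed, order stable ADP with finite policy set Σ. Then: (i) the fundamental ADP optimality results hold ((B1) V_Σ has a greatest element v*; (B2) v* is the unique fixed point of T in V; (B3) σ is optimal if and only if σ is v*-greedy); and (ii) HPI converges in finitely many steps: for every v ∈ V there exists n ∈ ℕ with Hⁿv = v*. -/
/-- Theorem t:bkf: Let `(V, 𝕋)` be a regular well-posed order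
stable ADP with finite policy set.  Then (i) the fundamental ADP optimality
results hold, and (ii) HPI converges in finitely many steps: for every
`v ∈ V` there is `n` with `Hⁿ v = v*`. -/
theorem stmt11 {V Pol : Type*} [PartialOrder V] [Nonempty Pol] [Finite Pol]
    (T : Pol → V → V) (hmono : ∀ σ : Pol, Monotone (T σ))
    -- regularity:
    (hreg : ∀ v : V, ∃ σ : Pol, ∀ τ : Pol, T τ v ≤ T σ v)
    -- the Bellman operator:
    (Bell : V → V)
    (hBell : ∀ (v : V) (σ : Pol), (∀ τ : Pol, T τ v ≤ T σ v) → Bell v = T σ v)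
    -- well-posedness:
    (vfix : Pol → V) (hfix : ∀ σ : Pol, T σ (vfix σ) = vfix σ)
    (huniq : ∀ (σ : Pol) (v : V), T σ v = v → v = vfix σ)
    -- order stability of every policy operator:
    (hup : ∀ (σ : Pol) (v : V), v ≤ T σ v → v ≤ vfix σ)
    (hdown : ∀ (σ : Pol) (v : V), T σ v ≤ v → vfix σ ≤ v)
    -- a fixed greedy selection, defining `H v = vfix (sel v)`:
    (sel : V → Pol) (hsel : ∀ v : V, ∀ τ : Pol, T τ v ≤ T (sel v) v) :
    ∃ σstar : Pol,
      -- (B1):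
      (∀ τ : Pol, vfix τ ≤ vfix σstar) ∧
      -- (B2):
      Bell (vfix σstar) = vfix σstar ∧
      (∀ v : V, Bell v = v → v = vfix σstar) ∧
      -- (B3):
      (∀ σ : Pol, (∀ τ : Pol, vfix τ ≤ vfix σ) ↔
        (∀ τ : Pol, T τ (vfix σstar) ≤ T σ (vfix σstar))) ∧
      -- (ii) HPI converges in finitely many steps:
      (∀ v : V, ∃ n : ℕ, (fun w => vfix (sel w))^[n] v = vfix σstar) := by
  classical
  set g : Pol → Pol := fun σ => sel (vfix σ) with hg
  -- along greedy improvement the fixed points increase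
  have hsucc : ∀ σ : Pol, vfix σ ≤ vfix (g σ) := by
    intro σ
    apply hup
    calc vfix σ = T σ (vfix σ) := (hfix σ).symm
      _ ≤ T (sel (vfix σ)) (vfix σ) := hsel _ σ
  -- a stationary policy dominates all others
  have hgreat : ∀ σ : Pol, vfix (g σ) = vfix σ → ∀ τ : Pol, vfix τ ≤ vfix σ := by
    intro σ hst τ
    apply hdown
    calc T τ (vfix σ) ≤ T (sel (vfix σ)) (vfix σ) := hsel _ τ
      _ = vfix σ := by
          have h := hfix (sel (vfix σ))
          simpa [show vfix (sel (vfix σ)) = vfix σ from hst] using h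
  -- pigeonhole: from any start, greedy iteration stabilizes
  have hstat : ∀ σ0 : Pol, ∃ m : ℕ, vfix (g (g^[m] σ0)) = vfix (g^[m] σ0) := by
    intro σ0
    obtain ⟨a, b, hab, heq⟩ :=
      Finite.exists_ne_map_eq_of_infinite (fun n : ℕ => g^[n] σ0)
    rcases hab.lt_or_gt with h | h
    · refine ⟨a, ?_⟩
      have hmon : Monotone fun n : ℕ => vfix (g^[n] σ0) := by
        apply monotone_nat_of_le_succ
        intro k
        have := hsucc (g^[k] σ0)
        simpa [Function.iterate_succ_apply'] using this
      have h1 : vfix (g^[a] σ0) ≤ vfix (g^[a+1] σ0) := hmon (Nat.le_succ a)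
      have h2 : vfix (g^[a+1] σ0) ≤ vfix (g^[b] σ0) := hmon h
      have h3 : vfix (g^[b] σ0) = vfix (g^[a] σ0) := by rw [heq]
      have : vfix (g^[a+1] σ0) = vfix (g^[a] σ0) :=
        le_antisymm (h3 ▸ h2) h1
      simpa [Function.iterate_succ_apply'] using this
    · refine ⟨b, ?_⟩
      have hmon : Monotone fun n : ℕ => vfix (g^[n] σ0) := by
        apply monotone_nat_of_le_succ
        intro k
        have := hsucc (g^[k] σ0)
        simpa [Function.iterate_succ_apply'] using this
      have h1 : vfix (g^[b] σ0) ≤ vfix (g^[b+1] σ0) := hmon (Nat.le_succ b)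
      have h2 : vfix (g^[b+1] σ0) ≤ vfix (g^[a] σ0) := hmon h
      have h3 : vfix (g^[a] σ0) = vfix (g^[b] σ0) := by rw [heq]
      have : vfix (g^[b+1] σ0) = vfix (g^[b] σ0) :=
        le_antisymm (h3 ▸ h2) h1
      simpa [Function.iterate_succ_apply'] using this
  -- get the optimal policy
  obtain ⟨m0, hm0⟩ := hstat (Classical.arbitrary Pol)
  set σstar : Pol := g^[m0] (Classical.arbitrary Pol) with hσstar
  have hB1 : ∀ τ : Pol, vfix τ ≤ vfix σstar := hgreat σstar hm0
  refine ⟨σstar, hB1, ?_, ?_, ?_, ?_⟩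
  case _ =>
    -- Bell fixes v*
    have hsel_eq : vfix (g σstar) = vfix σstar := hm0
    have hTsel : T (sel (vfix σstar)) (vfix σstar) = vfix σstar := by
      have h := hfix (sel (vfix σstar))
      simpa [show vfix (sel (vfix σstar)) = vfix σstar from hsel_eq] using h
    rw [hBell (vfix σstar) (sel (vfix σstar)) (hsel _)]
    exact hTsel
  case _ =>
    -- uniqueness of the Bellman fixed point
    intro v hv
    have h1 : T (sel v) v = v := by
      rw [← hBell v (sel v) (hsel v)]; exact hv
    have h2 : v = vfix (sel v) := huniq _ _ h1
    have hle : v ≤ vfix σstar := h2 ▸ hB1 (sel v)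
    have hge : vfix σstar ≤ v := by
      apply hdown
      calc T σstar v ≤ T (sel v) v := hsel v σstar
        _ = v := h1
    exact le_antisymm hle hge
  case _ =>
    -- (B3)
    intro σ
    have hTsel : T (sel (vfix σstar)) (vfix σstar) = vfix σstar := by
      have h := hfix (sel (vfix σstar))
      simpa [show vfix (sel (vfix σstar)) = vfix σstar from hm0] using h
    constructor
    · intro hopt τ
      have heq : vfix σ = vfix σstar := le_antisymm (hB1 σ) (hopt σstar)
      calc T τ (vfix σstar) ≤ T (sel (vfix σstar)) (vfix σstar) := hsel _ τ
        _ = vfix σstar := hTsel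
        _ = vfix σ := heq.symm
        _ = T σ (vfix σ) := (hfix σ).symm
        _ = T σ (vfix σstar) := by rw [heq]
    · intro hgr τ
      have hfixσ : T σ (vfix σstar) = vfix σstar :=
        le_antisymm (le_of_le_of_eq (hsel _ σ) hTsel)
          (hTsel.symm.trans_le (hgr (sel (vfix σstar))))
      have : vfix σstar = vfix σ := huniq σ _ hfixσ
      exact this ▸ hB1 τ
  case _ =>
    -- (ii): finite convergence of HPI
    intro v
    set H : V → V := fun w => vfix (sel w) with hH
    have hHg : ∀ (k : ℕ) (σ0 : Pol), H^[k] (vfix σ0) = vfix (g^[k] σ0) := by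
      intro k
      induction k with
      | zero => intro σ0; simp
      | succ n ih =>
          intro σ0
          rw [Function.iterate_succ_apply, Function.iterate_succ_apply]
          have : H (vfix σ0) = vfix (g σ0) := rfl
          rw [this, ih]
    obtain ⟨m, hm⟩ := hstat (sel v)
    refine ⟨m + 1, ?_⟩
    have hgreatm : ∀ τ : Pol, vfix τ ≤ vfix (g^[m] (sel v)) :=
      hgreat _ hm
    have hmax : vfix (g^[m] (sel v)) = vfix σstar :=
      le_antisymm (hB1 _) (hgreatm σstar)
    rw [Function.iterate_succ_apply]
    have hv1 : H v = vfix (sel v) := rfl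
    rw [hv1, hHg m (sel v), hmax]
end

section
/- Let (V, 𝕋) be a regular, well-posed ADP that is order continuous and order stable. Suppose V is countably Dedekind complete and (V, 𝕋) is bounded above, i.e., there exists u ∈ V with T_σ u ≤ u for all σ ∈ Σ. Then: (i) the fundamental ADP optimality results hold ((B1) V_Σ has a greatest element v*; (B2) v* is the unique fixed point of T in V; (B3) σ is optimal if and only if σ is v*-greedy); and (ii) VFI, OPI and HPI all converge: for every v ∈ V_U, Tⁿv ↑ v*, W_mⁿv ↑ v* and Hⁿv ↑ v*. -/
/-- Theorem t:dede: Let `(V, 𝕋)` be a regular well-posed ADP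
that is order continuous and order stable, with `V` countably Dedekind
complete and `(V, 𝕋)` bounded above.  Then (i) the fundamental ADP optimality
results hold, and (ii) VFI, OPI and HPI all converge on `V_U`. -/
theorem stmt12 {V Pol : Type*} [PartialOrder V] [Nonempty Pol]
    (T : Pol → V → V) (hmono : ∀ σ : Pol, Monotone (T σ))
    -- regularity:
    (hreg : ∀ v : V, ∃ σ : Pol, ∀ τ : Pol, T τ v ≤ T σ v)
    -- the Bellman operator:
    (Bell : V → V)
    (hBell : ∀ (v : V) (σ : Pol), (∀ τ : Pol, T τ v ≤ T σ v) → Bell v = T σ v)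
    -- well-posedness:
    (vfix : Pol → V) (hfix : ∀ σ : Pol, T σ (vfix σ) = vfix σ)
    (huniq : ∀ (σ : Pol) (v : V), T σ v = v → v = vfix σ)
    -- order continuity of every policy operator:
    (hcont : ∀ (σ : Pol) (f : ℕ → V) (v : V), Monotone f → IsLUB (Set.range f) v →
      IsLUB (Set.range fun n => T σ (f n)) (T σ v))
    -- order stability of every policy operator:
    (hup : ∀ (σ : Pol) (v : V), v ≤ T σ v → v ≤ vfix σ)
    (hdown : ∀ (σ : Pol) (v : V), T σ v ≤ v → vfix σ ≤ v)
    -- `V` is countably Dedekind complete: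
    (hded : ∀ S : Set V, S.Countable → S.Nonempty → BddAbove S → ∃ w : V, IsLUB S w)
    -- `(V, 𝕋)` is bounded above:
    (hbdd : ∃ u : V, ∀ σ : Pol, T σ u ≤ u)
    -- a fixed greedy selection, defining `H v = vfix (sel v)` and
    -- `W_m v = (T (sel v))^[m] v`:
    (sel : V → Pol) (hsel : ∀ v : V, ∀ τ : Pol, T τ v ≤ T (sel v) v)
    (m : ℕ) (hm : 1 ≤ m) :
    ∃ σstar : Pol,
      -- (B1):
      (∀ τ : Pol, vfix τ ≤ vfix σstar) ∧
      -- (B2):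
      Bell (vfix σstar) = vfix σstar ∧
      (∀ v : V, Bell v = v → v = vfix σstar) ∧
      -- (B3):
      (∀ σ : Pol, (∀ τ : Pol, vfix τ ≤ vfix σ) ↔
        (∀ τ : Pol, T τ (vfix σstar) ≤ T σ (vfix σstar))) ∧
      -- (ii) convergence of VFI, OPI and HPI on `V_U`:
      (∀ v : V, v ≤ Bell v →
        (Monotone fun n => Bell^[n] v) ∧
        IsLUB (Set.range fun n => Bell^[n] v) (vfix σstar) ∧
        (Monotone fun n => (fun w => (T (sel w))^[m] w)^[n] v) ∧
        IsLUB (Set.range fun n => (fun w => (T (sel w))^[m] w)^[n] v) (vfix σstar) ∧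
        (Monotone fun n => (fun w => vfix (sel w))^[n] v) ∧
        IsLUB (Set.range fun n => (fun w => vfix (sel w))^[n] v) (vfix σstar)) := by
  classical
  obtain ⟨u, hu⟩ := hbdd
  set B : V → V := fun v => T (sel v) v with hBdef
  have hB : ∀ v, Bell v = B v := fun v => hBell v (sel v) (hsel v)
  have hBf : Bell = B := funext hB
  have hBmono : Monotone B := by
    intro v w hvw
    exact le_trans (hmono (sel v) hvw) (hsel w (sel v))
  have hufix : ∀ σ, vfix σ ≤ u := fun σ => hdown σ u (hu σ)
  -- main lemma: VFI from any point of V_U converges to a fixed point of B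
  have main : ∀ v : V, v ≤ B v →
      (Monotone fun n => B^[n] v) ∧
        ∃ w, IsLUB (Set.range fun n => B^[n] v) w ∧ B w = w := by
    intro v hv
    have hiter : ∀ n, B^[n] v ≤ B (B^[n] v) := by
      intro n
      induction n with
      | zero => exact hv
      | succ k ih =>
        rw [Function.iterate_succ_apply']
        exact hBmono ih
    have hmonoSeq : Monotone fun n => B^[n] v := by
      apply monotone_nat_of_le_succ
      intro n
      rw [Function.iterate_succ_apply']
      exact hiter n
    have hle_u : ∀ n, B^[n] v ≤ u := by
      intro n
      exact le_trans (hup _ _ (hiter n)) (hufix _)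
    obtain ⟨w, hw⟩ := hded (Set.range fun n => B^[n] v) (Set.countable_range _)
      (Set.range_nonempty _) ⟨u, by rintro x ⟨n, rfl⟩; exact hle_u n⟩
    refine ⟨hmonoSeq, w, hw, ?_⟩
    have hwn : ∀ n, B^[n] v ≤ w := fun n => hw.1 ⟨n, rfl⟩
    have hle1 : w ≤ T (sel w) w := by
      apply hw.2
      rintro x ⟨n, rfl⟩
      calc B^[n] v ≤ T (sel (B^[n] v)) (B^[n] v) := hiter n
        _ ≤ T (sel (B^[n] v)) w := hmono _ (hwn n)
        _ ≤ T (sel w) w := hsel w _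
    have hle2 : T (sel w) w ≤ w := by
      have hc := hcont (sel w) (fun n => B^[n] v) w hmonoSeq hw
      apply hc.2
      rintro x ⟨n, rfl⟩
      calc T (sel w) (B^[n] v) ≤ T (sel (B^[n] v)) (B^[n] v) := hsel _ _
        _ = B^[n+1] v := (Function.iterate_succ_apply' B n v).symm
        _ ≤ w := hwn (n+1)
    exact le_antisymm hle2 hle1
  -- construct the optimal value
  obtain ⟨σ0⟩ := ‹Nonempty Pol›
  have hv0 : vfix σ0 ≤ B (vfix σ0) := by
    have h := hsel (vfix σ0) σ0
    rw [hfix σ0] at h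
    exact h
  obtain ⟨-, w0, hw0lub, hw0fix⟩ := main _ hv0
  have hw0eq : w0 = vfix (sel w0) := huniq (sel w0) w0 hw0fix
  have hgreatgen : ∀ w, B w = w → ∀ τ, vfix τ ≤ w := by
    intro w hwf τ
    apply hdown
    calc T τ w ≤ T (sel w) w := hsel w τ
      _ = w := hwf
  have hgreat : ∀ τ, vfix τ ≤ w0 := hgreatgen w0 hw0fix
  have hfixuniq : ∀ v, B v = v → v = w0 := by
    intro v hvf
    have h2 : v ≤ w0 := by
      rw [huniq (sel v) v hvf]; exact hgreat (sel v)
    have h3 : w0 ≤ v := by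
      rw [hw0eq]; exact hgreatgen v hvf (sel w0)
    exact le_antisymm h2 h3
  have hVU_le : ∀ v, v ≤ B v → v ≤ w0 := fun v hv =>
    le_trans (hup (sel v) v hv) (hgreat _)
  -- sandwich lemma for OPI and HPI
  have sandwich : ∀ F : V → V,
      (∀ w, w ≤ B w → w ≤ F w) →
      (∀ w, w ≤ B w → B w ≤ F w) →
      (∀ w, w ≤ B w → F w ≤ B (F w)) →
      ∀ v, v ≤ B v →
        (Monotone fun n => F^[n] v) ∧ IsLUB (Set.range fun n => F^[n] v) w0 := by
    intro F h1 h2 h3 v hv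
    have hVU : ∀ n, F^[n] v ≤ B (F^[n] v) := by
      intro n
      induction n with
      | zero => exact hv
      | succ k ih =>
        rw [Function.iterate_succ_apply']
        exact h3 _ ih
    have hmonoF : Monotone fun n => F^[n] v :=
      monotone_nat_of_le_succ fun n => by
        rw [Function.iterate_succ_apply']
        exact h1 _ (hVU n)
    have hsand : ∀ n, B^[n] v ≤ F^[n] v := by
      intro n
      induction n with
      | zero => exact le_rfl
      | succ k ih =>
        rw [Function.iterate_succ_apply', Function.iterate_succ_apply']
        exact le_trans (hBmono ih) (h2 _ (hVU k))
    have hFle : ∀ n, F^[n] v ≤ w0 := fun n => hVU_le _ (hVU n)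
    obtain ⟨hmB, w, hwlub, hwfix⟩ := main v hv
    have hww : w = w0 := hfixuniq w hwfix
    subst hww
    refine ⟨hmonoF, ?_, ?_⟩
    · rintro x ⟨n, rfl⟩; exact hFle n
    · intro b hb
      apply hwlub.2
      rintro x ⟨n, rfl⟩
      exact le_trans (hsand n) (hb ⟨n, rfl⟩)
  -- chains for a single policy operator
  have chain : ∀ (σ : Pol) (v : V), v ≤ T σ v → Monotone fun k => (T σ)^[k] v := by
    intro σ v hv
    apply monotone_nat_of_le_succ
    intro k
    induction k with
    | zero => simpa using hv
    | succ j ih =>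
      rw [Function.iterate_succ_apply', Function.iterate_succ_apply']
      exact hmono σ ih
  refine ⟨sel w0, ?_, ?_, ?_, ?_, ?_⟩
  · rw [← hw0eq]; exact hgreat
  · rw [← hw0eq, hB]; exact hw0fix
  · intro v hv
    rw [← hw0eq]
    exact hfixuniq v ((hB v).symm.trans hv)
  · intro σ
    rw [← hw0eq]
    constructor
    · intro h τ
      have hσw : vfix σ = w0 := le_antisymm (hgreat σ) (by
        have := h (sel w0); rw [← hw0eq] at this; exact this)
      calc T τ w0 ≤ T (sel w0) w0 := hsel w0 τ
        _ = w0 := hw0fix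
        _ = vfix σ := hσw.symm
        _ = T σ (vfix σ) := (hfix σ).symm
        _ = T σ w0 := by rw [hσw]
    · intro h τ
      have h1 : T σ w0 ≤ w0 := le_trans (hsel w0 σ) (le_of_eq hw0fix)
      have h2 : w0 ≤ T σ w0 := by
        have := h (sel w0)
        calc w0 = T (sel w0) w0 := hw0fix.symm
          _ ≤ T σ w0 := this
      have h3 : w0 = vfix σ := huniq σ w0 (le_antisymm h1 h2)
      rw [← h3]; exact hgreat τ
  · intro v hv
    rw [hB] at hv
    rw [← hw0eq, hBf]
    obtain ⟨hmB, w, hwlub, hwfix⟩ := main v hv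
    have hww : w = w0 := hfixuniq w hwfix
    subst hww
    refine ⟨hmB, hwlub, ?_⟩
    have hOPI := sandwich (fun w => (T (sel w))^[m] w)
      (fun w hw => by
        have := chain (sel w) w hw (Nat.zero_le m)
        simpa using this)
      (fun w hw => by
        have := chain (sel w) w hw hm
        simpa using this)
      (fun w hw => by
        show (T (sel w))^[m] w ≤ T (sel ((T (sel w))^[m] w)) ((T (sel w))^[m] w)
        calc (T (sel w))^[m] w ≤ (T (sel w))^[m+1] w :=
              chain (sel w) w hw (Nat.le_succ m)
          _ = T (sel w) ((T (sel w))^[m] w) := Function.iterate_succ_apply' _ _ _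
          _ ≤ T (sel ((T (sel w))^[m] w)) ((T (sel w))^[m] w) := hsel _ _)
      v hv
    have hHPI := sandwich (fun w => vfix (sel w))
      (fun w hw => hup (sel w) w hw)
      (fun w hw => by
        show T (sel w) w ≤ vfix (sel w)
        calc T (sel w) w ≤ T (sel w) (vfix (sel w)) := hmono _ (hup _ _ hw)
          _ = vfix (sel w) := hfix _)
      (fun w hw => by
        show vfix (sel w) ≤ T (sel (vfix (sel w))) (vfix (sel w))
        calc vfix (sel w) = T (sel w) (vfix (sel w)) := (hfix _).symm
          _ ≤ T (sel (vfix (sel w))) (vfix (sel w)) := hsel _ _)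
      v hv
    exact ⟨hOPI.1, hOPI.2, hHPI.1, hHPI.2⟩
end

section
/- Let (V, 𝕋) be a regular, well-posed ADP with Bellman operator T, Howard policy operator H, and optimistic policy operator W_m (for fixed m ∈ ℕ). Then: (i) T, W_m and H all map V_U into itself; and (ii) for every v ∈ V_U, Tv ≤ W_m v ≤ T^m v. -/
/-- Lemma (L2)-(L3): Let `(V, 𝕋)` be a regular well-posed ADP
with Bellman operator `Bell`, Howard policy operator `H v = vfix (sel v)` and
optimistic policy operator `W_m v = (T (sel v))^[m] v` for fixed `m ≥ 1`.
Then (i) `Bell`, `W_m` and `H` all map `V_U = {v : v ≤ Bell v}` into itself,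
and (ii) for every `v ∈ V_U`, `Bell v ≤ W_m v ≤ Bell^[m] v`. -/
theorem stmt14 {V Pol : Type*} [PartialOrder V] [Nonempty Pol]
    (T : Pol → V → V) (hmono : ∀ σ : Pol, Monotone (T σ))
    -- regularity:
    (hreg : ∀ v : V, ∃ σ : Pol, ∀ τ : Pol, T τ v ≤ T σ v)
    -- the Bellman operator:
    (Bell : V → V)
    (hBell : ∀ (v : V) (σ : Pol), (∀ τ : Pol, T τ v ≤ T σ v) → Bell v = T σ v)
    -- well-posedness:
    (vfix : Pol → V) (hfix : ∀ σ : Pol, T σ (vfix σ) = vfix σ)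
    (huniq : ∀ (σ : Pol) (v : V), T σ v = v → v = vfix σ)
    -- a fixed greedy selection:
    (sel : V → Pol) (hsel : ∀ v : V, ∀ τ : Pol, T τ v ≤ T (sel v) v)
    (m : ℕ) (hm : 1 ≤ m) :
    ∀ v : V, v ≤ Bell v →
      -- (i) `T`, `W_m` and `H` map `V_U` into itself:
      (Bell v ≤ Bell (Bell v)) ∧
      ((T (sel v))^[m] v ≤ Bell ((T (sel v))^[m] v)) ∧
      (vfix (sel v) ≤ Bell (vfix (sel v))) ∧
      -- (ii) `Bell v ≤ W_m v ≤ Bell^[m] v`: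
      (Bell v ≤ (T (sel v))^[m] v) ∧
      ((T (sel v))^[m] v ≤ Bell^[m] v) := by
  intro v hv
  have hBeq : ∀ w : V, Bell w = T (sel w) w := fun w => hBell w (sel w) (hsel w)
  have hTB : ∀ w : V, T (sel v) w ≤ Bell w := fun w => (hBeq w) ▸ hsel w (sel v)
  set σ := sel v with hσ
  have hvT : v ≤ T σ v := (hBeq v) ▸ hv
  -- iterates of T σ are increasing
  have hiter : ∀ k : ℕ, (T σ)^[k] v ≤ (T σ)^[k+1] v := by
    intro k
    induction k with
    | zero => simpa using hvT
    | succ n ih =>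
      rw [Function.iterate_succ_apply', Function.iterate_succ_apply']
      exact hmono σ ih
  have hmono_iter : ∀ i j : ℕ, i ≤ j → (T σ)^[i] v ≤ (T σ)^[j] v := by
    intro i j hij
    induction j with
    | zero => simpa using Nat.le_zero.mp hij ▸ le_refl _
    | succ n ih =>
      rcases Nat.lt_or_ge i (n+1) with h | h
      · exact le_trans (ih (Nat.lt_succ_iff.mp h)) (hiter n)
      · have : i = n+1 := le_antisymm hij h
        subst this; exact le_refl _
  refine ⟨?_, ?_, ?_, ?_, ?_⟩
  · rw [hBeq v]
    exact le_trans (hmono σ hvT) (hTB (T σ v))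
  · have h1 : (T σ)^[m] v ≤ T σ ((T σ)^[m] v) := by
      calc (T σ)^[m] v ≤ (T σ)^[m+1] v := hiter m
        _ = T σ ((T σ)^[m] v) := Function.iterate_succ_apply' (T σ) m v
    exact le_trans h1 (hTB _)
  · have := hfix σ
    calc vfix σ = T σ (vfix σ) := (hfix σ).symm
      _ ≤ Bell (vfix σ) := hTB _
  · rw [hBeq v]
    have := hmono_iter 1 m hm
    simpa using this
  · clear hm
    induction m with
    | zero => simp
    | succ n ih =>
      rw [Function.iterate_succ_apply', Function.iterate_succ_apply']
      exact le_trans (hmono σ ih) (hTB _)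
end

section
/- Let (V, 𝕋) be a regular, well-posed, upward stable ADP with Bellman operator T, Howard policy operator H, and optimistic policy operator W_m (for fixed m ∈ ℕ). Then for every v ∈ V_U and every n ∈ ℕ: Tⁿv ≤ W_mⁿ v and Tⁿv ≤ Hⁿ v. Moreover, the sequences (Tⁿv)ₙ, (W_mⁿv)ₙ and (Hⁿv)ₙ are all increasing. -/
/-- Lemma l:cl2: Let `(V, 𝕋)` be a regular well-posed upward
stable ADP with Bellman operator `Bell`, Howard policy operator
`H v = vfix (sel v)` and optimistic policy operator `W_m v = (T (sel v))^[m] v`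
for fixed `m ≥ 1`.  Then for every `v ∈ V_U` and every `n`,
`Bellⁿ v ≤ W_mⁿ v` and `Bellⁿ v ≤ Hⁿ v`; moreover the VFI, OPI and HPI
sequences are all increasing. -/
theorem stmt15 {V Pol : Type*} [PartialOrder V] [Nonempty Pol]
    (T : Pol → V → V) (hmono : ∀ σ : Pol, Monotone (T σ))
    -- regularity:
    (hreg : ∀ v : V, ∃ σ : Pol, ∀ τ : Pol, T τ v ≤ T σ v)
    -- the Bellman operator:
    (Bell : V → V)
    (hBell : ∀ (v : V) (σ : Pol), (∀ τ : Pol, T τ v ≤ T σ v) → Bell v = T σ v)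
    -- well-posedness:
    (vfix : Pol → V) (hfix : ∀ σ : Pol, T σ (vfix σ) = vfix σ)
    (huniq : ∀ (σ : Pol) (v : V), T σ v = v → v = vfix σ)
    -- upward stability of every policy operator:
    (hup : ∀ (σ : Pol) (v : V), v ≤ T σ v → v ≤ vfix σ)
    -- a fixed greedy selection:
    (sel : V → Pol) (hsel : ∀ v : V, ∀ τ : Pol, T τ v ≤ T (sel v) v)
    (m : ℕ) (hm : 1 ≤ m) :
    ∀ v : V, v ≤ Bell v →
      (∀ n : ℕ,
        Bell^[n] v ≤ (fun w => (T (sel w))^[m] w)^[n] v ∧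
        Bell^[n] v ≤ (fun w => vfix (sel w))^[n] v) ∧
      (Monotone fun n => Bell^[n] v) ∧
      (Monotone fun n => (fun w => (T (sel w))^[m] w)^[n] v) ∧
      (Monotone fun n => (fun w => vfix (sel w))^[n] v) := by
  intro v hv
  set W : V → V := fun w => (T (sel w))^[m] w with hWdef
  set H : V → V := fun w => vfix (sel w) with hHdef
  have hBeq : ∀ u : V, Bell u = T (sel u) u := fun u => hBell u (sel u) (hsel u)
  have hBge : ∀ (u : V) (τ : Pol), T τ u ≤ Bell u := by
    intro u τ; rw [hBeq u]; exact hsel u τ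
  have hBmono : Monotone Bell := by
    intro a b hab
    rw [hBeq a]
    exact le_trans (hmono (sel a) hab) (hBge b (sel a))
  -- key one-step facts for any u with u ≤ Bell u
  have keyW : ∀ u : V, u ≤ Bell u → u ≤ W u ∧ Bell u ≤ W u ∧ W u ≤ Bell (W u) := by
    intro u hu
    have hu' : u ≤ T (sel u) u := (hBeq u) ▸ hu
    have hiter : Monotone fun k => (T (sel u))^[k] u := by
      apply monotone_nat_of_le_succ
      intro k
      rw [Function.iterate_succ_apply]
      exact (hmono (sel u)).iterate k hu'
    have h0 : u ≤ W u := by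
      have := hiter (Nat.zero_le m); simpa using this
    have h1 : Bell u ≤ W u := by
      rw [hBeq u]
      have := hiter hm; simpa using this
    have h2 : W u ≤ Bell (W u) := by
      have hstep : (T (sel u))^[m] u ≤ T (sel u) ((T (sel u))^[m] u) := by
        have := hiter (Nat.le_succ m)
        simpa [Function.iterate_succ_apply'] using this
      exact le_trans hstep (hBge _ (sel u))
    exact ⟨h0, h1, h2⟩
  have keyH : ∀ u : V, u ≤ Bell u → u ≤ H u ∧ Bell u ≤ H u ∧ H u ≤ Bell (H u) := by
    intro u hu
    have hu' : u ≤ T (sel u) u := (hBeq u) ▸ hu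
    have h0 : u ≤ H u := hup (sel u) u hu'
    have h1 : Bell u ≤ H u := by
      rw [hBeq u]
      calc T (sel u) u ≤ T (sel u) (vfix (sel u)) := hmono (sel u) h0
        _ = vfix (sel u) := hfix (sel u)
    have h2 : H u ≤ Bell (H u) := by
      have : vfix (sel u) = T (sel u) (vfix (sel u)) := (hfix (sel u)).symm
      calc H u = T (sel u) (vfix (sel u)) := this
        _ ≤ Bell (vfix (sel u)) := hBge _ _
        _ = Bell (H u) := rfl
    exact ⟨h0, h1, h2⟩
  -- the main invariant by induction
  have main : ∀ n : ℕ,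
      (Bell^[n] v ≤ Bell (Bell^[n] v)) ∧
      (Bell^[n] v ≤ W^[n] v ∧ W^[n] v ≤ Bell (W^[n] v)) ∧
      (Bell^[n] v ≤ H^[n] v ∧ H^[n] v ≤ Bell (H^[n] v)) := by
    intro n
    induction n with
    | zero => exact ⟨hv, ⟨le_refl v, hv⟩, ⟨le_refl v, hv⟩⟩
    | succ k ih =>
      obtain ⟨hB, ⟨hW1, hW2⟩, ⟨hH1, hH2⟩⟩ := ih
      refine ⟨?_, ⟨?_, ?_⟩, ⟨?_, ?_⟩⟩
      · rw [Function.iterate_succ_apply']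
        exact hBmono hB
      · rw [Function.iterate_succ_apply', Function.iterate_succ_apply']
        exact le_trans (hBmono hW1) (keyW _ hW2).2.1
      · rw [Function.iterate_succ_apply']
        exact (keyW _ hW2).2.2
      · rw [Function.iterate_succ_apply', Function.iterate_succ_apply']
        exact le_trans (hBmono hH1) (keyH _ hH2).2.1
      · rw [Function.iterate_succ_apply']
        exact (keyH _ hH2).2.2
  refine ⟨fun n => ⟨(main n).2.1.1, (main n).2.2.1⟩, ?_, ?_, ?_⟩
  · apply monotone_nat_of_le_succ
    intro n
    rw [Function.iterate_succ_apply']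
    exact (main n).1
  · apply monotone_nat_of_le_succ
    intro n
    rw [Function.iterate_succ_apply']
    exact (keyW _ (main n).2.1.2).1
  · apply monotone_nat_of_le_succ
    intro n
    rw [Function.iterate_succ_apply']
    exact (keyH _ (main n).2.2.2).1
end

section
/- Let (V, 𝕋) be a regular, well-posed, upward stable ADP for which an optimal policy exists (so V_Σ has a greatest element v*). If VFI converges (Tⁿv ↑ v* for all v ∈ V_U), then OPI converges (W_mⁿv ↑ v* for all v ∈ V_U) and HPI converges (Hⁿv ↑ v* for all v ∈ V_U). -/
/-- Corollary c:cl2: Let `(V, 𝕋)` be a regular well-posed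
upward stable ADP for which an optimal policy exists, with value function
`v* = vfix σ*`.  If VFI converges (`Bellⁿ v ↑ v*` for all `v ∈ V_U`), then
OPI converges (`W_mⁿ v ↑ v*` for all `v ∈ V_U`) and HPI converges
(`Hⁿ v ↑ v*` for all `v ∈ V_U`). -/
theorem stmt16 {V Pol : Type*} [PartialOrder V] [Nonempty Pol]
    (T : Pol → V → V) (hmono : ∀ σ : Pol, Monotone (T σ))
    -- regularity:
    (hreg : ∀ v : V, ∃ σ : Pol, ∀ τ : Pol, T τ v ≤ T σ v)
    -- the Bellman operator:
    (Bell : V → V)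
    (hBell : ∀ (v : V) (σ : Pol), (∀ τ : Pol, T τ v ≤ T σ v) → Bell v = T σ v)
    -- well-posedness:
    (vfix : Pol → V) (hfix : ∀ σ : Pol, T σ (vfix σ) = vfix σ)
    (huniq : ∀ (σ : Pol) (v : V), T σ v = v → v = vfix σ)
    -- upward stability of every policy operator:
    (hup : ∀ (σ : Pol) (v : V), v ≤ T σ v → v ≤ vfix σ)
    -- an optimal policy exists, i.e. `V_Σ` has greatest element `vfix σstar`:
    (σstar : Pol) (hstar : ∀ τ : Pol, vfix τ ≤ vfix σstar)
    -- a fixed greedy selection: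
    (sel : V → Pol) (hsel : ∀ v : V, ∀ τ : Pol, T τ v ≤ T (sel v) v)
    (m : ℕ) (hm : 1 ≤ m)
    -- VFI converges:
    (hVFI : ∀ v : V, v ≤ Bell v →
      (Monotone fun n => Bell^[n] v) ∧
      IsLUB (Set.range fun n => Bell^[n] v) (vfix σstar)) :
    -- OPI and HPI converge:
    ∀ v : V, v ≤ Bell v →
      (Monotone fun n => (fun w => (T (sel w))^[m] w)^[n] v) ∧
      IsLUB (Set.range fun n => (fun w => (T (sel w))^[m] w)^[n] v) (vfix σstar) ∧
      (Monotone fun n => (fun w => vfix (sel w))^[n] v) ∧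
      IsLUB (Set.range fun n => (fun w => vfix (sel w))^[n] v) (vfix σstar) := by
  intro v hv
  have hBellsel : ∀ u : V, Bell u = T (sel u) u := fun u => hBell u (sel u) (hsel u)
  have hBellmono : Monotone Bell := fun a b hab => by
    rw [hBellsel a, hBellsel b]
    exact (hmono (sel a) hab).trans (hsel b (sel a))
  have hiterfix : ∀ (σ : Pol) (k : ℕ), (T σ)^[k] (vfix σ) = vfix σ := by
    intro σ k
    induction k with
    | zero => rfl
    | succ k ih => rw [Function.iterate_succ_apply', ih, hfix]
  have hle_iter : ∀ (σ : Pol) (u : V), u ≤ T σ u → ∀ k, u ≤ (T σ)^[k] u := by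
    intro σ u hu k
    induction k with
    | zero => exact le_rfl
    | succ k ih =>
      calc u ≤ (T σ)^[k] u := ih
        _ ≤ (T σ)^[k] (T σ u) := (hmono σ).iterate k hu
        _ = (T σ)^[k+1] u := (Function.iterate_succ_apply (T σ) k u).symm
  set W : V → V := fun w => (T (sel w))^[m] w with hWdef
  set H : V → V := fun w => vfix (sel w) with hHdef
  have key : ∀ u : V, u ≤ Bell u →
      (Bell u ≤ W u) ∧ (W u ≤ H u) ∧ (H u ≤ vfix σstar) ∧
      (W u ≤ Bell (W u)) ∧ (H u ≤ Bell (H u)) := by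
    intro u hu
    have hTu : u ≤ T (sel u) u := by rw [← hBellsel]; exact hu
    have huH : u ≤ vfix (sel u) := hup _ _ hTu
    obtain ⟨k, rfl⟩ : ∃ k, m = k + 1 := ⟨m - 1, (Nat.succ_pred_eq_of_pos hm).symm⟩
    have hBW : Bell u ≤ W u := by
      rw [hBellsel u]
      have : T (sel u) u ≤ (T (sel u))^[k] (T (sel u) u) :=
        hle_iter _ _ (hmono (sel u) hTu) k
      simpa [hWdef, Function.iterate_succ_apply] using this
    have hWH : W u ≤ H u := by
      have : (T (sel u))^[k+1] u ≤ (T (sel u))^[k+1] (vfix (sel u)) :=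
        (hmono (sel u)).iterate (k+1) huH
      simpa [hWdef, hHdef, hiterfix] using this
    refine ⟨hBW, hWH, (hup _ _ (le_of_eq (hfix (sel u)).symm)).trans (hstar _), ?_, ?_⟩
    · calc W u ≤ T (sel u) (W u) := by
            have : (T (sel u))^[k+1] u ≤ (T (sel u))^[k+1] (T (sel u) u) :=
              (hmono (sel u)).iterate (k+1) hTu
            simpa [hWdef, ← Function.iterate_succ_apply, Function.iterate_succ_apply']
              using this
        _ ≤ T (sel (W u)) (W u) := hsel _ _
        _ = Bell (W u) := (hBellsel _).symm
    · calc H u = T (sel u) (H u) := (hfix (sel u)).symm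
        _ ≤ T (sel (H u)) (H u) := hsel _ _
        _ = Bell (H u) := (hBellsel _).symm
  -- iterate facts
  have hWiter : ∀ n : ℕ, (W^[n] v ≤ Bell (W^[n] v)) ∧ (Bell^[n] v ≤ W^[n] v) := by
    intro n
    induction n with
    | zero => exact ⟨hv, le_rfl⟩
    | succ n ih =>
      obtain ⟨hin, hle⟩ := ih
      have hk := key _ hin
      constructor
      · rw [Function.iterate_succ_apply']
        exact hk.2.2.2.1
      · rw [Function.iterate_succ_apply', Function.iterate_succ_apply']
        exact (hBellmono hle).trans hk.1
  have hHiter : ∀ n : ℕ, (H^[n] v ≤ Bell (H^[n] v)) ∧ (Bell^[n] v ≤ H^[n] v) := by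
    intro n
    induction n with
    | zero => exact ⟨hv, le_rfl⟩
    | succ n ih =>
      obtain ⟨hin, hle⟩ := ih
      have hk := key _ hin
      constructor
      · rw [Function.iterate_succ_apply']
        exact hk.2.2.2.2
      · rw [Function.iterate_succ_apply', Function.iterate_succ_apply']
        exact ((hBellmono hle).trans hk.1).trans hk.2.1
  have hWub : ∀ n : ℕ, W^[n] v ≤ vfix σstar := by
    intro n
    have hk := key _ (hWiter n).1
    exact ((hWiter n).1.trans hk.1).trans (hk.2.1.trans hk.2.2.1)
  have hHub : ∀ n : ℕ, H^[n] v ≤ vfix σstar := by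
    intro n
    have hk := key _ (hHiter n).1
    exact ((hHiter n).1.trans hk.1).trans (hk.2.1.trans hk.2.2.1)
  obtain ⟨hBmono, hBlub⟩ := hVFI v hv
  have lubW : IsLUB (Set.range fun n => W^[n] v) (vfix σstar) := by
    constructor
    · rintro x ⟨n, rfl⟩; exact hWub n
    · intro b hb
      refine hBlub.2 ?_
      rintro x ⟨n, rfl⟩
      exact (hWiter n).2.trans (hb ⟨n, rfl⟩)
  have lubH : IsLUB (Set.range fun n => H^[n] v) (vfix σstar) := by
    constructor
    · rintro x ⟨n, rfl⟩; exact hHub n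
    · intro b hb
      refine hBlub.2 ?_
      rintro x ⟨n, rfl⟩
      exact (hHiter n).2.trans (hb ⟨n, rfl⟩)
  have monW : Monotone fun n => W^[n] v := by
    apply monotone_nat_of_le_succ
    intro n
    have hk := key _ (hWiter n).1
    rw [Function.iterate_succ_apply']
    exact (hWiter n).1.trans hk.1
  have monH : Monotone fun n => H^[n] v := by
    apply monotone_nat_of_le_succ
    intro n
    have hk := key _ (hHiter n).1
    rw [Function.iterate_succ_apply']
    exact ((hHiter n).1.trans hk.1).trans hk.2.1
  exact ⟨monW, lubW, monH, lubH⟩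
end

section
/- Consider the non-expected-utility discrete choice model: let 𝖷 (states) and 𝖠 (actions) be nonempty finite sets, 𝖦 = 𝖷 × 𝖠, let (E, ℰ_E, ν) be a probability space, let r : 𝖷 × 𝖠 × E → ℝ be bounded and measurable in its last argument, and let β ∈ (0,1). Let the certainty equivalent 𝓔 : ℝ^𝖷 → ℝ^𝖦 be order preserving with respect to the pointwise orders, map each constant function to the same constant, and be constant subadditive (𝓔(f + λ) ≤ 𝓔f + λ pointwise for every f and constant λ ≥ 0). Let Σ = 𝖠^𝖷 and, for σ ∈ Σ and g ∈ ℝ^𝖦, define (T_σ g) = 𝓔(H_σ g) where (H_σ g)(x′) = ∫ [ r(x′, σ(x′), e′) + β g(x′, σ(x′)) ] ν(de′). Then the ADP (ℝ^𝖦, {T_σ}_{σ∈Σ}) is regular and well-posed, the fundamental ADP optimality results hold ((B1) V_Σ = {v_σ : σ ∈ Σ} has a greatest element v*; (B2) v* is the unique fixed point of the Bellman operator T in ℝ^𝖦; (B3) σ is optimal if and only if σ is v*-greedy), and Howard policy iteration converges in finitely many steps: for every g ∈ ℝ^𝖦 there exists n ∈ ℕ with Hⁿg = v*. -/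
open MeasureTheory

/-- The policy operator of the non-EU discrete choice model:
`T_σ g = 𝓔 (H_σ g)` where `(H_σ g)(x') = ∫ (r x' (σ x') e' + β g(x', σ x')) ν(de')`. -/
noncomputable def polOp {X A Ev : Type*} [MeasurableSpace Ev]
    (ν : Measure Ev) (r : X → A → Ev → ℝ) (β : ℝ)
    (CE : (X → ℝ) → (X × A → ℝ)) (σ : X → A) (g : X × A → ℝ) : X × A → ℝ :=
  CE (fun x' => ∫ e', (r x' (σ x') e' + β * g (x', σ x')) ∂ν)

/-- `σ` is `g`-greedy for the non-EU discrete choice model. -/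
def greedyPol {X A Ev : Type*} [MeasurableSpace Ev]
    (ν : Measure Ev) (r : X → A → Ev → ℝ) (β : ℝ)
    (CE : (X → ℝ) → (X × A → ℝ)) (σ : X → A) (g : X × A → ℝ) : Prop :=
  ∀ τ : X → A, polOp ν r β CE τ g ≤ polOp ν r β CE σ g

namespace Stmt19Aux
set_option linter.unusedSectionVars false

variable {X A Ev : Type*} [Fintype X] [Nonempty X] [Fintype A] [Nonempty A]
  [MeasurableSpace Ev]

/-- `∫ r x a dν`. -/
noncomputable def Rfun (ν : Measure Ev) (r : X → A → Ev → ℝ) (x : X) (a : A) : ℝ :=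
  ∫ e, r x a e ∂ν

/-- The deterministic form of `H_σ g`. -/
noncomputable def Hfun (ν : Measure Ev) (r : X → A → Ev → ℝ) (β : ℝ)
    (σ : X → A) (g : X × A → ℝ) : X → ℝ :=
  fun x => Rfun ν r x (σ x) + β * g (x, σ x)

lemma polOp_eq (ν : Measure Ev) [IsProbabilityMeasure ν] (r : X → A → Ev → ℝ)
    (hrbdd : ∃ M : ℝ, ∀ (x : X) (a : A) (e : Ev), |r x a e| ≤ M)
    (hrmeas : ∀ (x : X) (a : A), Measurable (r x a))
    (β : ℝ) (CE : (X → ℝ) → (X × A → ℝ)) (σ : X → A) (g : X × A → ℝ) :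
    polOp ν r β CE σ g = CE (Hfun ν r β σ g) := by
  obtain ⟨M, hM⟩ := hrbdd
  unfold polOp Hfun Rfun
  refine congrArg CE ?_
  funext x
  have hint : Integrable (r x (σ x)) ν :=
    ⟨(hrmeas x (σ x)).aestronglyMeasurable,
      HasFiniteIntegral.of_bounded (C := M) (ae_of_all _ fun e => by
        simpa [Real.norm_eq_abs] using hM x (σ x) e)⟩
  rw [integral_add hint (integrable_const _), integral_const]
  simp

lemma key (ν : Measure Ev) [IsProbabilityMeasure ν] (r : X → A → Ev → ℝ)
    (hrbdd : ∃ M : ℝ, ∀ (x : X) (a : A) (e : Ev), |r x a e| ≤ M)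
    (hrmeas : ∀ (x : X) (a : A), Measurable (r x a))
    (β : ℝ) (hβ0 : 0 ≤ β) (CE : (X → ℝ) → (X × A → ℝ))
    (hCEmono : Monotone CE)
    (hCEsub : ∀ (f : X → ℝ) (lam : ℝ), 0 ≤ lam →
      CE (fun x => f x + lam) ≤ fun p => CE f p + lam)
    (σ : X → A) (g h : X × A → ℝ) (c : ℝ) (hc : 0 ≤ c)
    (hgh : ∀ p, g p ≤ h p + c) :
    ∀ p, polOp ν r β CE σ g p ≤ polOp ν r β CE σ h p + β * c := by
  intro p
  rw [polOp_eq ν r ⟨_, (Classical.choose_spec hrbdd)⟩ hrmeas β CE σ g,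
    polOp_eq ν r ⟨_, (Classical.choose_spec hrbdd)⟩ hrmeas β CE σ h]
  have h1 : CE (Hfun ν r β σ g) ≤ CE (fun x => Hfun ν r β σ h x + β * c) := by
    apply hCEmono
    intro x
    simp only [Hfun]
    have := hgh (x, σ x)
    nlinarith
  have h2 := hCEsub (Hfun ν r β σ h) (β * c) (mul_nonneg hβ0 hc)
  exact (h1 p).trans (h2 p)

lemma exists_greedy (ν : Measure Ev) [IsProbabilityMeasure ν] (r : X → A → Ev → ℝ)
    (hrbdd : ∃ M : ℝ, ∀ (x : X) (a : A) (e : Ev), |r x a e| ≤ M)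
    (hrmeas : ∀ (x : X) (a : A), Measurable (r x a))
    (β : ℝ) (CE : (X → ℝ) → (X × A → ℝ)) (hCEmono : Monotone CE)
    (g : X × A → ℝ) : ∃ σ : X → A, greedyPol ν r β CE σ g := by
  have hA : ∀ x : X, ∃ a : A, ∀ b : A,
      Rfun ν r x b + β * g (x, b) ≤ Rfun ν r x a + β * g (x, a) := by
    intro x
    obtain ⟨a, -, ha⟩ := Finset.exists_max_image Finset.univ
      (fun a : A => Rfun ν r x a + β * g (x, a)) ⟨Classical.arbitrary A, Finset.mem_univ _⟩
    exact ⟨a, fun b => ha b (Finset.mem_univ b)⟩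
  choose σ hσ using hA
  refine ⟨σ, fun τ => ?_⟩
  rw [polOp_eq ν r hrbdd hrmeas β CE τ g, polOp_eq ν r hrbdd hrmeas β CE σ g]
  apply hCEmono
  intro x
  exact hσ x (τ x)

lemma exists_fixed (ν : Measure Ev) [IsProbabilityMeasure ν] (r : X → A → Ev → ℝ)
    (hrbdd : ∃ M : ℝ, ∀ (x : X) (a : A) (e : Ev), |r x a e| ≤ M)
    (hrmeas : ∀ (x : X) (a : A), Measurable (r x a))
    (β : ℝ) (hβ : β ∈ Set.Ioo (0 : ℝ) 1) (CE : (X → ℝ) → (X × A → ℝ))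
    (hCEmono : Monotone CE)
    (hCEsub : ∀ (f : X → ℝ) (lam : ℝ), 0 ≤ lam →
      CE (fun x => f x + lam) ≤ fun p => CE f p + lam)
    (σ : X → A) : ∃ v, polOp ν r β CE σ v = v := by
  set T := polOp ν r β CE σ with hT
  have hlip : LipschitzWith ⟨β, hβ.1.le⟩ T := by
    apply LipschitzWith.of_dist_le_mul
    intro g h
    have hd : (0 : ℝ) ≤ dist g h := dist_nonneg
    show dist (T g) (T h) ≤ β * dist g h
    rw [dist_pi_le_iff (mul_nonneg hβ.1.le hd)]
    intro p
    have hgh : ∀ q, g q ≤ h q + dist g h := by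
      intro q
      have h1 := dist_le_pi_dist g h q
      rw [Real.dist_eq] at h1
      have := le_abs_self (g q - h q)
      linarith
    have hhg : ∀ q, h q ≤ g q + dist g h := by
      intro q
      have h1 := dist_le_pi_dist g h q
      rw [Real.dist_eq] at h1
      have := neg_abs_le (g q - h q)
      linarith
    have k1 := key ν r hrbdd hrmeas β hβ.1.le CE hCEmono hCEsub σ g h (dist g h) hd hgh p
    have k2 := key ν r hrbdd hrmeas β hβ.1.le CE hCEmono hCEsub σ h g (dist g h) hd hhg p
    rw [Real.dist_eq, abs_le]
    constructor <;> [skip; skip] <;> simp only [← hT] at k1 k2 <;> linarith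
  have hcw : ContractingWith ⟨β, hβ.1.le⟩ T := ⟨by exact_mod_cast hβ.2, hlip⟩
  exact ⟨hcw.fixedPoint T, hcw.fixedPoint_isFixedPt⟩

lemma le_fix (ν : Measure Ev) [IsProbabilityMeasure ν] (r : X → A → Ev → ℝ)
    (hrbdd : ∃ M : ℝ, ∀ (x : X) (a : A) (e : Ev), |r x a e| ≤ M)
    (hrmeas : ∀ (x : X) (a : A), Measurable (r x a))
    (β : ℝ) (hβ : β ∈ Set.Ioo (0 : ℝ) 1) (CE : (X → ℝ) → (X × A → ℝ))
    (hCEmono : Monotone CE)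
    (hCEsub : ∀ (f : X → ℝ) (lam : ℝ), 0 ≤ lam →
      CE (fun x => f x + lam) ≤ fun p => CE f p + lam)
    (σ : X → A) (g v : X × A → ℝ)
    (hv : polOp ν r β CE σ v = v) (hg : g ≤ polOp ν r β CE σ g) : g ≤ v := by
  set c := (Finset.univ.sup' Finset.univ_nonempty (fun p : X × A => g p - v p)) ⊔ 0 with hc
  have hc0 : (0 : ℝ) ≤ c := le_sup_right
  have hgv : ∀ p, g p ≤ v p + c := by
    intro p
    have : g p - v p ≤ c :=
      le_trans (Finset.le_sup' (fun p : X × A => g p - v p) (Finset.mem_univ p)) le_sup_left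
    linarith
  have h1 := key ν r hrbdd hrmeas β hβ.1.le CE hCEmono hCEsub σ g v c hc0 hgv
  have h2 : ∀ p, g p ≤ v p + β * c := by
    intro p
    have := h1 p
    rw [hv] at this
    exact le_trans (hg p) this
  have h3 : c ≤ β * c := by
    have hs : Finset.univ.sup' Finset.univ_nonempty (fun p : X × A => g p - v p) ≤ β * c := by
      apply Finset.sup'_le
      intro p _
      have := h2 p
      linarith
    exact sup_le hs (mul_nonneg hβ.1.le hc0)
  have hceq : c = 0 := by nlinarith [hβ.2]
  intro p
  have := h2 p
  rw [hceq] at this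
  linarith

lemma fix_le (ν : Measure Ev) [IsProbabilityMeasure ν] (r : X → A → Ev → ℝ)
    (hrbdd : ∃ M : ℝ, ∀ (x : X) (a : A) (e : Ev), |r x a e| ≤ M)
    (hrmeas : ∀ (x : X) (a : A), Measurable (r x a))
    (β : ℝ) (hβ : β ∈ Set.Ioo (0 : ℝ) 1) (CE : (X → ℝ) → (X × A → ℝ))
    (hCEmono : Monotone CE)
    (hCEsub : ∀ (f : X → ℝ) (lam : ℝ), 0 ≤ lam →
      CE (fun x => f x + lam) ≤ fun p => CE f p + lam)
    (σ : X → A) (g v : X × A → ℝ)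
    (hv : polOp ν r β CE σ v = v) (hg : polOp ν r β CE σ g ≤ g) : v ≤ g := by
  set c := (Finset.univ.sup' Finset.univ_nonempty (fun p : X × A => v p - g p)) ⊔ 0 with hc
  have hc0 : (0 : ℝ) ≤ c := le_sup_right
  have hvg : ∀ p, v p ≤ g p + c := by
    intro p
    have : v p - g p ≤ c :=
      le_trans (Finset.le_sup' (fun p : X × A => v p - g p) (Finset.mem_univ p)) le_sup_left
    linarith
  have h1 := key ν r hrbdd hrmeas β hβ.1.le CE hCEmono hCEsub σ v g c hc0 hvg
  have h2 : ∀ p, v p ≤ g p + β * c := by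
    intro p
    have h' := h1 p
    rw [hv] at h'
    have := hg p
    linarith
  have h3 : c ≤ β * c := by
    have hs : Finset.univ.sup' Finset.univ_nonempty (fun p : X × A => v p - g p) ≤ β * c := by
      apply Finset.sup'_le
      intro p _
      have := h2 p
      linarith
    exact sup_le hs (mul_nonneg hβ.1.le hc0)
  have hceq : c = 0 := by nlinarith [hβ.2]
  intro p
  have := h2 p
  rw [hceq] at this
  linarith

end Stmt19Aux

/-- Proposition p:stor: For the non-EU discrete choice model
with finite state set `X`, finite action set `A`, bounded reward `r`
(measurable in the shock), discount `β ∈ (0,1)`, and a certainty equivalent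
`𝓔` that is order preserving, constant preserving and constant subadditive,
the ADP `(ℝ^{X×A}, {T_σ})` is regular and well-posed, the fundamental ADP
optimality results (B1)-(B3) hold, and Howard policy iteration converges in
finitely many steps. -/
theorem stmt19 {X A Ev : Type*} [Fintype X] [Nonempty X] [Fintype A] [Nonempty A]
    [MeasurableSpace Ev] (ν : Measure Ev) [IsProbabilityMeasure ν]
    (r : X → A → Ev → ℝ)
    (hrbdd : ∃ M : ℝ, ∀ (x : X) (a : A) (e : Ev), |r x a e| ≤ M)
    (hrmeas : ∀ (x : X) (a : A), Measurable (r x a))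
    (β : ℝ) (hβ : β ∈ Set.Ioo (0 : ℝ) 1)
    (CE : (X → ℝ) → (X × A → ℝ))
    (hCEmono : Monotone CE)
    (hCEconst : ∀ c : ℝ, CE (fun _ => c) = fun _ => c)
    (hCEsub : ∀ (f : X → ℝ) (lam : ℝ), 0 ≤ lam →
      CE (fun x => f x + lam) ≤ fun p => CE f p + lam) :
    -- regularity:
    (∀ g : X × A → ℝ, ∃ σ : X → A, greedyPol ν r β CE σ g) ∧
    -- well-posedness, (B1), (B2), (B3) and finite-step convergence of HPI:
    ∃ vfix : (X → A) → (X × A → ℝ),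
      (∀ σ : X → A, polOp ν r β CE σ (vfix σ) = vfix σ ∧
        ∀ g : X × A → ℝ, polOp ν r β CE σ g = g → g = vfix σ) ∧
      ∃ σstar : X → A,
        -- (B1): `V_Σ` has greatest element `v* = vfix σstar`
        (∀ τ : X → A, vfix τ ≤ vfix σstar) ∧
        -- (B2): `v*` is the unique fixed point of the Bellman operator
        (∀ σ : X → A, greedyPol ν r β CE σ (vfix σstar) →
          polOp ν r β CE σ (vfix σstar) = vfix σstar) ∧
        (∀ (g : X × A → ℝ) (σ : X → A), greedyPol ν r β CE σ g →
          polOp ν r β CE σ g = g → g = vfix σstar) ∧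
        -- (B3): `σ` is optimal iff `σ` is `v*`-greedy
        (∀ σ : X → A, (∀ τ : X → A, vfix τ ≤ vfix σ) ↔
          greedyPol ν r β CE σ (vfix σstar)) ∧
        -- HPI converges in finitely many steps (for any greedy selection):
        (∀ sel : (X × A → ℝ) → (X → A),
          (∀ g : X × A → ℝ, greedyPol ν r β CE (sel g) g) →
          ∀ g : X × A → ℝ, ∃ n : ℕ,
            (fun h => vfix (sel h))^[n] g = vfix σstar) := by
  classical
  open Stmt19Aux in
  -- regularity
  have hreg : ∀ g : X × A → ℝ, ∃ σ : X → A, greedyPol ν r β CE σ g := fun g =>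
    Stmt19Aux.exists_greedy ν r hrbdd hrmeas β CE hCEmono g
  -- well-posedness
  have hfixex : ∀ σ : X → A, ∃ v, polOp ν r β CE σ v = v := fun σ =>
    Stmt19Aux.exists_fixed ν r hrbdd hrmeas β hβ CE hCEmono hCEsub σ
  choose vfix hvfix using hfixex
  have huniq : ∀ (σ : X → A) (g : X × A → ℝ), polOp ν r β CE σ g = g → g = vfix σ := by
    intro σ g hg
    exact le_antisymm
      (Stmt19Aux.le_fix ν r hrbdd hrmeas β hβ CE hCEmono hCEsub σ g (vfix σ) (hvfix σ)
        (le_of_eq hg.symm))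
      (Stmt19Aux.fix_le ν r hrbdd hrmeas β hβ CE hCEmono hCEsub σ g (vfix σ) (hvfix σ) hg.le)
  -- policy improvement
  have himp : ∀ σ τ : X → A, greedyPol ν r β CE τ (vfix σ) → vfix σ ≤ vfix τ := by
    intro σ τ hτ
    apply Stmt19Aux.le_fix ν r hrbdd hrmeas β hβ CE hCEmono hCEsub τ (vfix σ) (vfix τ) (hvfix τ)
    calc vfix σ = polOp ν r β CE σ (vfix σ) := (hvfix σ).symm
      _ ≤ polOp ν r β CE τ (vfix σ) := hτ σ
  refine ⟨hreg, vfix, fun σ => ⟨hvfix σ, fun g hg => huniq σ g hg⟩, ?_⟩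
  -- choose a σstar maximizing the sum of values
  obtain ⟨σstar, -, hσstar⟩ := Finset.exists_max_image (Finset.univ : Finset (X → A))
    (fun σ => ∑ p : X × A, vfix σ p) ⟨Classical.arbitrary _, Finset.mem_univ _⟩
  obtain ⟨τ', hτ'⟩ := hreg (vfix σstar)
  have hτ'fix : vfix τ' = vfix σstar := by
    have h1 : vfix σstar ≤ vfix τ' := himp σstar τ' hτ'
    have h2 : ∑ p : X × A, vfix τ' p ≤ ∑ p : X × A, vfix σstar p :=
      hσstar τ' (Finset.mem_univ _)
    funext p
    by_contra hne
    have hlt : vfix σstar p < vfix τ' p := lt_of_le_of_ne (h1 p) (Ne.symm hne)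
    have := Finset.sum_lt_sum (fun q (_ : q ∈ Finset.univ) => h1 q)
      ⟨p, Finset.mem_univ p, hlt⟩
    linarith
  have hbell : polOp ν r β CE τ' (vfix σstar) = vfix σstar := by
    rw [← hτ'fix]
    exact hvfix τ'
  have hTle : ∀ τ : X → A, polOp ν r β CE τ (vfix σstar) ≤ vfix σstar :=
    fun τ => (hτ' τ).trans (le_of_eq hbell)
  -- (B1)
  have hopt : ∀ τ : X → A, vfix τ ≤ vfix σstar := fun τ =>
    Stmt19Aux.fix_le ν r hrbdd hrmeas β hβ CE hCEmono hCEsub τ (vfix σstar) (vfix τ)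
      (hvfix τ) (hTle τ)
  -- (B2) part 1
  have hB2a : ∀ σ : X → A, greedyPol ν r β CE σ (vfix σstar) →
      polOp ν r β CE σ (vfix σstar) = vfix σstar := by
    intro σ hσ
    refine le_antisymm (hTle σ) ?_
    calc vfix σstar = polOp ν r β CE τ' (vfix σstar) := hbell.symm
      _ ≤ polOp ν r β CE σ (vfix σstar) := hσ τ'
  -- (B2) part 2
  have hB2b : ∀ (g : X × A → ℝ) (σ : X → A), greedyPol ν r β CE σ g →
      polOp ν r β CE σ g = g → g = vfix σstar := by
    intro g σ hσ hg
    have h1 : g ≤ vfix σstar := (huniq σ g hg).le.trans (hopt σ)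
    have h2 : vfix σstar ≤ g := by
      apply Stmt19Aux.fix_le ν r hrbdd hrmeas β hβ CE hCEmono hCEsub σstar g (vfix σstar)
        (hvfix σstar)
      exact (hσ σstar).trans (le_of_eq hg)
    exact le_antisymm h1 h2
  -- (B3)
  have hB3 : ∀ σ : X → A, (∀ τ : X → A, vfix τ ≤ vfix σ) ↔
      greedyPol ν r β CE σ (vfix σstar) := by
    intro σ
    constructor
    · intro h
      have heq : vfix σ = vfix σstar := le_antisymm (hopt σ) (h σstar)
      intro τ
      have h1 := hTle τ
      have h2 : polOp ν r β CE σ (vfix σstar) = vfix σstar := by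
        rw [← heq]
        exact hvfix σ
      rw [h2]
      exact h1
    · intro hσ
      have : vfix σstar = vfix σ := huniq σ (vfix σstar) (hB2a σ hσ)
      intro τ
      rw [← this]
      exact hopt τ
  refine ⟨σstar, hopt, hB2a, hB2b, hB3, ?_⟩
  -- HPI
  intro sel hsel g
  set F : (X × A → ℝ) → (X × A → ℝ) := fun h => vfix (sel h) with hF
  have hstep : ∀ h : X × A → ℝ, F h = vfix (sel h) := fun _ => rfl
  have hmono : ∀ n : ℕ, F^[n + 1] g ≤ F^[n + 2] g := by
    intro n
    have h1 : F^[n + 1] g = vfix (sel (F^[n] g)) := by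
      rw [Function.iterate_succ_apply']
    have h2 : F^[n + 2] g = F (F^[n + 1] g) := Function.iterate_succ_apply' F (n + 1) g
    rw [h2, h1, hstep]
    exact himp _ _ (hsel _)
  have hchain : ∀ m n : ℕ, F^[m + 1] g ≤ F^[m + 1 + n] g := by
    intro m n
    induction n with
    | zero => exact le_rfl
    | succ k ih =>
      refine ih.trans ?_
      have := hmono (m + k)
      have heq : m + 1 + k = m + k + 1 := by ring
      have heq2 : m + 1 + (k + 1) = m + k + 2 := by ring
      rw [heq, heq2]
      exact this
  obtain ⟨i, j, hne, hij⟩ := Finite.exists_ne_map_eq_of_infinite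
    (fun n : ℕ => sel (F^[n + 1] g))
  -- wlog i < j
  obtain ⟨i, j, hlt, hij⟩ : ∃ i j : ℕ, i < j ∧ sel (F^[i + 1] g) = sel (F^[j + 1] g) := by
    rcases hne.lt_or_gt with h | h
    · exact ⟨i, j, h, hij⟩
    · exact ⟨j, i, h, hij.symm⟩
  have hij2 : F^[i + 2] g = F^[j + 2] g := by
    have h1 : F^[i + 2] g = F (F^[i + 1] g) := Function.iterate_succ_apply' F (i + 1) g
    have h2 : F^[j + 2] g = F (F^[j + 1] g) := Function.iterate_succ_apply' F (j + 1) g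
    rw [h1, h2, hstep, hstep, hij]
  have hstat : F^[i + 3] g = F^[i + 2] g := by
    have hub : F^[i + 3] g ≤ F^[j + 2] g := by
      have := hchain (i + 2) (j - i - 1)
      have heq : i + 2 + 1 + (j - i - 1) = j + 2 := by omega
      rw [heq] at this
      exact this
    have hlb : F^[i + 2] g ≤ F^[i + 3] g := hmono (i + 1)
    rw [← hij2] at hub
    exact le_antisymm hub hlb
  have hfixpt : vfix (sel (F^[i + 2] g)) = F^[i + 2] g := by
    have : F^[i + 3] g = F (F^[i + 2] g) := Function.iterate_succ_apply' F (i + 2) g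
    rw [this, hstep] at hstat
    exact hstat
  have hpol : polOp ν r β CE (sel (F^[i + 2] g)) (F^[i + 2] g) = F^[i + 2] g := by
    have h0 := hvfix (sel (F^[i + 2] g))
    rw [hfixpt] at h0
    exact h0
  exact ⟨i + 2, hB2b (F^[i + 2] g) (sel (F^[i + 2] g)) (hsel _) hpol⟩
end
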